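/- arXiv:2410.05188 — 5 statements merged into one kernel-verified Lean document; each statement's English description precedes it below -/
import Mathlib

section
/- For a coherent connected matrix-weighted network, the supra-Laplacian factorizes as ℒ = 𝒮ᵀ(L̄ ⊗ I)𝒮, where 𝒮 is the block diagonal matrix whose i-th diagonal block is the transformation S_{1σ(i)} of any directed path from the first block of the coherence partition to the block containing node i, and L̄ = D − W̄ is the scalar graph Laplacian built from the edge magnitudes w_{ij}. -/
open Matrix Kronecker Filter

variable {n nd m : ℕ}

/-- Supra-weight matrix: block matrix with (i,j)-block `W i j`. -/
def supra (W : Fin n → Fin n → Matrix (Fin nd) (Fin nd) ℝ) :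
    Matrix (Fin n × Fin nd) (Fin n × Fin nd) ℝ :=
  fun p q => W p.1 q.1 p.2 q.2

/-- Supra-Laplacian `ℒ = (D ⊗ I) − 𝒲`, built from edge magnitudes `w` and
edge transformations `R` (so `W i j = w i j • R i j`). -/
noncomputable def supraLap (w : Fin n → Fin n → ℝ)
    (R : Fin n → Fin n → Matrix (Fin nd) (Fin nd) ℝ) :
    Matrix (Fin n × Fin nd) (Fin n × Fin nd) ℝ :=
  (Matrix.diagonal (fun i => ∑ j, w i j)) ⊗ₖ (1 : Matrix (Fin nd) (Fin nd) ℝ)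
    - supra (fun i j => w i j • R i j)

/-- Supra-transition matrix `𝒫 = 𝒟⁻¹𝒲`. -/
noncomputable def supraP (w : Fin n → Fin n → ℝ)
    (R : Fin n → Fin n → Matrix (Fin nd) (Fin nd) ℝ) :
    Matrix (Fin n × Fin nd) (Fin n × Fin nd) ℝ :=
  fun p q => w p.1 q.1 * R p.1 q.1 p.2 q.2 / (∑ k, w p.1 k)

/-- Transformation of a directed path, given as its list of visited nodes:
the ordered product of the edge transformations. -/
def pathTransform (R : Fin n → Fin n → Matrix (Fin nd) (Fin nd) ℝ) :
    List (Fin n) → Matrix (Fin nd) (Fin nd) ℝ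
  | [] => 1
  | [_] => 1
  | i :: j :: rest => R i j * pathTransform R (j :: rest)

/-- `p` is a directed path from `i` to `j` along edges of the relation `E`. -/
def IsPathFrom (E : Fin n → Fin n → Prop) (i j : Fin n) (p : List (Fin n)) : Prop :=
  p.Chain' E ∧ p.head? = some i ∧ p.getLast? = some j

/-- Coherence: the transformation of every directed cycle is the identity. -/
def Coherent (E : Fin n → Fin n → Prop)
    (R : Fin n → Fin n → Matrix (Fin nd) (Fin nd) ℝ) : Prop :=
  ∀ i (p : List (Fin n)), IsPathFrom E i i p → pathTransform R p = 1

/-- Connectivity: any two nodes are joined by a directed path. -/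
def Connected (E : Fin n → Fin n → Prop) : Prop :=
  ∀ i j, ∃ p, IsPathFrom E i j p

/-- The block-diagonal matrix `𝒮` whose `i`-th diagonal block is `S b0 (σ i)`. -/
def blockS (σ : Fin n → Fin m) (S : Fin m → Fin m → Matrix (Fin nd) (Fin nd) ℝ)
    (b0 : Fin m) : Matrix (Fin n × Fin nd) (Fin n × Fin nd) ℝ :=
  fun p q => if p.1 = q.1 then S b0 (σ p.1) p.2 q.2 else 0

lemma pathTransform_append_single (R : Fin n → Fin n → Matrix (Fin nd) (Fin nd) ℝ) :
    ∀ (p : List (Fin n)) (x j : Fin n), p.getLast? = some x →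
      pathTransform R (p ++ [j]) = pathTransform R p * R x j := by
  intro p
  induction p with
  | nil => intro x j h; simp at h
  | cons a t ih =>
    intro x j h
    cases t with
    | nil =>
      simp only [List.getLast?_singleton, Option.some.injEq] at h
      subst h
      simp [pathTransform]
    | cons b rest =>
      have hlast : (b :: rest).getLast? = some x := by
        rw [List.getLast?_cons_cons] at h; exact h
      show pathTransform R (a :: b :: (rest ++ [j])) = _
      rw [pathTransform]
      have := ih x j hlast
      rw [show (b :: (rest ++ [j])) = (b :: rest) ++ [j] from rfl, this,
        pathTransform, mul_assoc]

lemma edge_orth (w : Fin n → Fin n → ℝ)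
    (R : Fin n → Fin n → Matrix (Fin nd) (Fin nd) ℝ)
    (hw_symm : ∀ i j, w i j = w j i)
    (hrec : ∀ i j, R i j = (R j i)ᵀ)
    (hcoh : Coherent (fun i j => w i j ≠ 0) R) :
    ∀ i j, w i j ≠ 0 → R i j * (R i j)ᵀ = 1 := by
  intro i j h
  have hcycle : IsPathFrom (fun i j => w i j ≠ 0) i i [i, j, i] := by
    refine ⟨?_, rfl, rfl⟩
    refine List.isChain_cons_cons.mpr ⟨h, List.isChain_cons_cons.mpr ⟨?_, List.isChain_singleton _⟩⟩
    rw [← hw_symm]; exact h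
  have := hcoh i [i, j, i] hcycle
  simp only [pathTransform, mul_one] at this
  rw [hrec j i] at this
  exact this

lemma pathTransform_orth (w : Fin n → Fin n → ℝ)
    (R : Fin n → Fin n → Matrix (Fin nd) (Fin nd) ℝ)
    (hw_symm : ∀ i j, w i j = w j i)
    (hrec : ∀ i j, R i j = (R j i)ᵀ)
    (hcoh : Coherent (fun i j => w i j ≠ 0) R) :
    ∀ p : List (Fin n), p.Chain' (fun i j => w i j ≠ 0) →
      pathTransform R p * (pathTransform R p)ᵀ = 1 := by
  intro p
  induction p with
  | nil => intro _; simp [pathTransform]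
  | cons a t ih =>
    intro h
    cases t with
    | nil => simp [pathTransform]
    | cons b rest =>
      replace h := List.isChain_cons_cons.mp h
      have hP := ih h.2
      show (R a b * pathTransform R (b :: rest)) * (R a b * pathTransform R (b :: rest))ᵀ = 1
      rw [Matrix.transpose_mul, mul_assoc, ← mul_assoc (pathTransform R (b :: rest)), hP,
        one_mul, edge_orth w R hw_symm hrec hcoh a b h.1]

/-- for a coherent connected network, the supra-Laplacian factorizes
as `ℒ = 𝒮ᵀ(L̄ ⊗ I)𝒮`, with `𝒮` block diagonal (blocks `S_{1σ(i)}`) and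
`L̄ = D − W̄` the scalar Laplacian of the magnitudes. -/
theorem stmt4 [NeZero n] (w : Fin n → Fin n → ℝ)
    (R : Fin n → Fin n → Matrix (Fin nd) (Fin nd) ℝ)
    (σ : Fin n → Fin m) (S : Fin m → Fin m → Matrix (Fin nd) (Fin nd) ℝ)
    (hw_symm : ∀ i j, w i j = w j i) (hw_nonneg : ∀ i j, 0 ≤ w i j)
    (hloop : ∀ i, w i i = 0)
    (hrec : ∀ i j, R i j = (R j i)ᵀ)
    (hcoh : Coherent (fun i j => w i j ≠ 0) R)
    (hconn : Connected (fun i j => w i j ≠ 0))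
    (hS : ∀ i j q, IsPathFrom (fun i j => w i j ≠ 0) i j q →
      S (σ i) (σ j) = pathTransform R q) :
    supraLap w R =
      (blockS σ S (σ 0))ᵀ *
        ((Matrix.diagonal (fun i => ∑ j, w i j) - Matrix.of w)
          ⊗ₖ (1 : Matrix (Fin nd) (Fin nd) ℝ)) *
        blockS σ S (σ 0) := by
  set E : Fin n → Fin n → Prop := fun i j => w i j ≠ 0 with hE
  set T : Fin n → Matrix (Fin nd) (Fin nd) ℝ := fun i => S (σ 0) (σ i) with hT
  have key1 : ∀ i, (T i)ᵀ * T i = 1 := by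
    intro i
    obtain ⟨p, hp⟩ := hconn 0 i
    have hTi : T i = pathTransform R p := hS 0 i p hp
    have horth := pathTransform_orth w R hw_symm hrec hcoh p hp.1
    rw [hTi]
    exact mul_eq_one_comm.mp horth
  have key2 : ∀ i j, w i j ≠ 0 → (T i)ᵀ * T j = R i j := by
    intro i j hij
    obtain ⟨p, hp⟩ := hconn 0 i
    have hpne : p ≠ [] := by
      intro h; subst h; simp [IsPathFrom] at hp
    have hpj : IsPathFrom E 0 j (p ++ [j]) := by
      refine ⟨?_, ?_, ?_⟩
      · refine List.IsChain.append hp.1 (List.isChain_singleton _) ?_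
        intro x hx y hy
        rw [hp.2.2] at hx
        simp at hx hy
        subst hx; subst hy
        exact hij
      · rw [List.head?_append_of_ne_nil _ hpne, hp.2.1]
      · exact List.getLast?_concat
    have hTj : T j = pathTransform R (p ++ [j]) := hS 0 j _ hpj
    rw [pathTransform_append_single R p i j hp.2.2] at hTj
    have hTi : T i = pathTransform R p := hS 0 i p hp
    rw [hTj, ← hTi, ← mul_assoc, key1 i, one_mul]
  ext ⟨i, a⟩ ⟨j, b⟩
  have hRHS : ((blockS σ S (σ 0))ᵀ *
        ((Matrix.diagonal (fun i => ∑ j, w i j) - Matrix.of w)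
          ⊗ₖ (1 : Matrix (Fin nd) (Fin nd) ℝ)) *
        blockS σ S (σ 0)) (i, a) (j, b)
      = ((Matrix.diagonal (fun i => ∑ j, w i j) - Matrix.of w) i j) *
          (((T i)ᵀ * T j) a b) := by
    simp only [Matrix.mul_apply, Matrix.transpose_apply, blockS,
      Matrix.kroneckerMap_apply, Fintype.sum_prod_type, Matrix.one_apply, hT]
    simp only [mul_ite, mul_zero, mul_one, ite_mul, zero_mul,
      Finset.sum_ite_eq, Finset.sum_ite_eq', Finset.mem_univ, if_true]
    rw [Finset.sum_comm]
    simp only [Finset.sum_ite_eq', Finset.mem_univ, if_true, Finset.mul_sum]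
    exact Finset.sum_congr rfl (fun c _ => by ring)
  rw [hRHS]
  simp only [supraLap, supra, Matrix.sub_apply, Matrix.kroneckerMap_apply,
    Matrix.diagonal_apply, Matrix.one_apply, Matrix.smul_apply, smul_eq_mul,
    Matrix.of_apply]
  by_cases hij : i = j
  · subst hij
    simp only [if_pos rfl, hloop i, sub_zero, mul_zero, zero_mul, sub_zero]
    rw [key1 i]
    simp [Matrix.one_apply]
  · simp only [if_neg hij, zero_mul, zero_sub, zero_sub]
    by_cases hw : w i j = 0
    · simp [hw]
    · rw [key2 i j hw]
      ring
end

section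
/- The supra-transition matrix 𝒫 = 𝒟⁻¹𝒲 of a matrix-weighted network has spectral radius at most 1. -/
open Matrix Kronecker Filter

variable {n nd m : ℕ}

lemma auxCS {N : ℕ} (u z : Fin N → ℂ) :
    ‖∑ a, (starRingEnd ℂ) (u a) * z a‖ ≤
      Real.sqrt (∑ a, Complex.normSq (u a)) * Real.sqrt (∑ a, Complex.normSq (z a)) := by
  have h1 : ‖∑ a, (starRingEnd ℂ) (u a) * z a‖ ≤
      ∑ a, ‖u a‖ * ‖z a‖ := by
    refine (norm_sum_le _ _).trans ?_
    apply Finset.sum_le_sum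
    intro a _
    simp
  refine h1.trans ?_
  have h2 := Finset.sum_mul_sq_le_sq_mul_sq Finset.univ (fun a => ‖u a‖)
    (fun a => ‖z a‖)
  have h3 : ∀ (x : ℂ), ‖x‖ ^ 2 = Complex.normSq x := fun x => Complex.sq_norm x
  rw [show (∑ a, ‖u a‖ ^ 2) = ∑ a, Complex.normSq (u a) by simp [h3],
      show (∑ a, ‖z a‖ ^ 2) = ∑ a, Complex.normSq (z a) by simp [h3]] at h2
  have hnn : (0:ℝ) ≤ ∑ a, ‖u a‖ * ‖z a‖ :=
    Finset.sum_nonneg fun a _ => mul_nonneg (norm_nonneg _) (norm_nonneg _)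
  nlinarith [Real.sq_sqrt (Finset.sum_nonneg fun a (_ : a ∈ Finset.univ) => Complex.normSq_nonneg (u a)),
    Real.sq_sqrt (Finset.sum_nonneg fun a (_ : a ∈ Finset.univ) => Complex.normSq_nonneg (z a)),
    Real.sqrt_nonneg (∑ a, Complex.normSq (u a)), Real.sqrt_nonneg (∑ a, Complex.normSq (z a)),
    mul_nonneg (Real.sqrt_nonneg (∑ a, Complex.normSq (u a))) (Real.sqrt_nonneg (∑ a, Complex.normSq (z a)))]

lemma auxR {N : ℕ} (M : Matrix (Fin N) (Fin N) ℝ)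
    (h : ∀ x : Fin N → ℝ, ∑ a, (M.mulVec x a) ^ 2 ≤ ∑ a, (x a) ^ 2)
    (v : Fin N → ℂ) :
    ∑ a, Complex.normSq (∑ b, (M a b : ℂ) * v b) ≤ ∑ b, Complex.normSq (v b) := by
  have hre : ∀ a, (∑ b, (M a b : ℂ) * v b).re = M.mulVec (fun b => (v b).re) a := by
    intro a
    simp [Complex.re_sum, Matrix.mulVec, dotProduct, Complex.re_ofReal_mul]
  have him : ∀ a, (∑ b, (M a b : ℂ) * v b).im = M.mulVec (fun b => (v b).im) a := by
    intro a
    simp [Complex.im_sum, Matrix.mulVec, dotProduct, Complex.im_ofReal_mul]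
  simp only [Complex.normSq_apply]
  calc ∑ a, ((∑ b, (M a b : ℂ) * v b).re * (∑ b, (M a b : ℂ) * v b).re
        + (∑ b, (M a b : ℂ) * v b).im * (∑ b, (M a b : ℂ) * v b).im)
      = (∑ a, (M.mulVec (fun b => (v b).re) a) ^ 2)
        + ∑ a, (M.mulVec (fun b => (v b).im) a) ^ 2 := by
        rw [← Finset.sum_add_distrib]
        refine Finset.sum_congr rfl fun a _ => ?_
        rw [hre, him]; ring
    _ ≤ (∑ b, ((v b).re) ^ 2) + ∑ b, ((v b).im) ^ 2 :=
        add_le_add (h _) (h _)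
    _ = ∑ b, ((v b).re * (v b).re + (v b).im * (v b).im) := by
        rw [← Finset.sum_add_distrib]; refine Finset.sum_congr rfl fun b _ => by ring

/-- the supra-transition matrix `𝒫 = 𝒟⁻¹𝒲` has spectral radius
at most `1`: every (complex) eigenvalue has modulus at most `1`. -/
theorem stmt8 (w : Fin n → Fin n → ℝ)
    (R : Fin n → Fin n → Matrix (Fin nd) (Fin nd) ℝ)
    (hw_symm : ∀ i j, w i j = w j i) (hw_nonneg : ∀ i j, 0 ≤ w i j)
    (hrec : ∀ i j, R i j = (R j i)ᵀ)
    (hRnorm : ∀ i j (x : Fin nd → ℝ),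
      ∑ a, ((R i j).mulVec x a) ^ 2 ≤ ∑ a, (x a) ^ 2)
    (hd : ∀ i, 0 < ∑ j, w i j) :
    ∀ μ ∈ spectrum ℂ ((supraP w R).map (algebraMap ℝ ℂ)), ‖μ‖ ≤ 1 := by
  intro μ hμ
  classical
  rw [spectrum.mem_iff] at hμ
  have hdet : (algebraMap ℂ (Matrix (Fin n × Fin nd) (Fin n × Fin nd) ℂ) μ
      - (supraP w R).map (algebraMap ℝ ℂ)).det = 0 := by
    by_contra hne
    exact hμ ((Matrix.isUnit_iff_isUnit_det _).mpr (isUnit_iff_ne_zero.mpr hne))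
  obtain ⟨v, hv0, hv⟩ := Matrix.exists_mulVec_eq_zero_iff.mpr hdet
  have heig : ((supraP w R).map (algebraMap ℝ ℂ)) *ᵥ v = μ • v := by
    rw [Matrix.sub_mulVec] at hv
    have h1 : (algebraMap ℂ (Matrix (Fin n × Fin nd) (Fin n × Fin nd) ℂ) μ) *ᵥ v = μ • v := by
      funext p
      simp [Matrix.algebraMap_eq_diagonal, Matrix.mulVec_diagonal]
    rw [h1] at hv
    exact (sub_eq_zero.mp hv).symm
  -- key pointwise identity
  have key : ∀ p : Fin n × Fin nd,
      ∑ q : Fin n × Fin nd, ((w p.1 q.1 * R p.1 q.1 p.2 q.2 : ℝ) : ℂ) * v q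
        = μ * ((∑ k, w p.1 k : ℝ) : ℂ) * v p := by
    intro p
    have h1 : ∑ q : Fin n × Fin nd,
        ((w p.1 q.1 * R p.1 q.1 p.2 q.2 / (∑ k, w p.1 k) : ℝ) : ℂ) * v q = μ * v p := by
      have h2 := congrFun heig p
      simpa [Matrix.mulVec, dotProduct, supraP, Matrix.map_apply, Pi.smul_apply,
        smul_eq_mul] using h2
    have hdp : ((∑ k, w p.1 k : ℝ) : ℂ) ≠ 0 := by
      exact_mod_cast (hd p.1).ne'
    calc ∑ q : Fin n × Fin nd, ((w p.1 q.1 * R p.1 q.1 p.2 q.2 : ℝ) : ℂ) * v q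
        = ((∑ k, w p.1 k : ℝ) : ℂ) * ∑ q : Fin n × Fin nd,
            ((w p.1 q.1 * R p.1 q.1 p.2 q.2 / (∑ k, w p.1 k) : ℝ) : ℂ) * v q := by
          rw [Finset.mul_sum]
          refine Finset.sum_congr rfl fun q _ => ?_
          have hdp' : (∑ i : Fin n, ((w p.1 i : ℝ) : ℂ)) ≠ 0 := by
            push_cast at hdp; exact hdp
          push_cast
          field_simp
      _ = ((∑ k, w p.1 k : ℝ) : ℂ) * (μ * v p) := by rw [h1]
      _ = μ * ((∑ k, w p.1 k : ℝ) : ℂ) * v p := by ring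
  set N : Fin n → ℝ := fun i => ∑ a, Complex.normSq (v (i, a)) with hN
  set T : ℝ := ∑ i, (∑ k, w i k) * N i with hT
  have hNnn : ∀ i, 0 ≤ N i := fun i => Finset.sum_nonneg fun a _ => Complex.normSq_nonneg _
  -- the weighted quadratic form identity
  have hmain : ∑ i, ∑ j, ((w i j : ℝ) : ℂ) *
      ∑ a, (starRingEnd ℂ) (v (i, a)) * ∑ b, ((R i j a b : ℝ) : ℂ) * v (j, b)
      = μ * (T : ℂ) := by
    have lhs_eq : ∑ i, ∑ j, ((w i j : ℝ) : ℂ) *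
        ∑ a, (starRingEnd ℂ) (v (i, a)) * ∑ b, ((R i j a b : ℝ) : ℂ) * v (j, b)
        = ∑ p : Fin n × Fin nd, (starRingEnd ℂ) (v p) *
            ∑ q : Fin n × Fin nd, ((w p.1 q.1 * R p.1 q.1 p.2 q.2 : ℝ) : ℂ) * v q := by
      rw [Fintype.sum_prod_type]
      refine Finset.sum_congr rfl fun i _ => ?_
      simp only [Fintype.sum_prod_type, Finset.mul_sum]
      rw [Finset.sum_comm]
      refine Finset.sum_congr rfl fun j _ => ?_
      refine Finset.sum_congr rfl fun a _ => ?_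
      refine Finset.sum_congr rfl fun b _ => ?_
      push_cast
      ring
    rw [lhs_eq]
    calc ∑ p : Fin n × Fin nd, (starRingEnd ℂ) (v p) *
          ∑ q : Fin n × Fin nd, ((w p.1 q.1 * R p.1 q.1 p.2 q.2 : ℝ) : ℂ) * v q
        = ∑ p : Fin n × Fin nd, (starRingEnd ℂ) (v p) * (μ * ((∑ k, w p.1 k : ℝ) : ℂ) * v p) := by
          refine Finset.sum_congr rfl fun p _ => by rw [key p]
      _ = μ * ∑ p : Fin n × Fin nd, ((∑ k, w p.1 k : ℝ) : ℂ) * ((Complex.normSq (v p) : ℝ) : ℂ) := by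
          rw [Finset.mul_sum]
          refine Finset.sum_congr rfl fun p _ => ?_
          have : (starRingEnd ℂ) (v p) * v p = ((Complex.normSq (v p) : ℝ) : ℂ) := by
            rw [mul_comm, Complex.mul_conj]
          calc (starRingEnd ℂ) (v p) * (μ * ((∑ k, w p.1 k : ℝ) : ℂ) * v p)
              = μ * (((∑ k, w p.1 k : ℝ) : ℂ) * ((starRingEnd ℂ) (v p) * v p)) := by ring
            _ = μ * (((∑ k, w p.1 k : ℝ) : ℂ) * ((Complex.normSq (v p) : ℝ) : ℂ)) := by rw [this]
      _ = μ * (T : ℂ) := by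
          congr 1
          rw [hT, Fintype.sum_prod_type]
          push_cast
          refine Finset.sum_congr rfl fun i _ => ?_
          rw [hN]
          push_cast
          rw [Finset.mul_sum]
  -- bound each block term
  have hblock : ∀ i j, ‖∑ a, (starRingEnd ℂ) (v (i, a)) *
      ∑ b, ((R i j a b : ℝ) : ℂ) * v (j, b)‖ ≤ Real.sqrt (N i) * Real.sqrt (N j) := by
    intro i j
    refine (auxCS (fun a => v (i, a)) (fun a => ∑ b, ((R i j a b : ℝ) : ℂ) * v (j, b))).trans ?_
    have h1 : ∑ a, Complex.normSq (∑ b, ((R i j a b : ℝ) : ℂ) * v (j, b)) ≤ N j :=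
      auxR (R i j) (hRnorm i j) (fun b => v (j, b))
    exact mul_le_mul_of_nonneg_left (Real.sqrt_le_sqrt h1) (Real.sqrt_nonneg _)
  -- abs estimate
  have habs : ‖μ * (T : ℂ)‖ ≤ T := by
    rw [← hmain]
    calc ‖∑ i, ∑ j, ((w i j : ℝ) : ℂ) *
          ∑ a, (starRingEnd ℂ) (v (i, a)) * ∑ b, ((R i j a b : ℝ) : ℂ) * v (j, b)‖
        ≤ ∑ i, ∑ j, w i j * (Real.sqrt (N i) * Real.sqrt (N j)) := by
          refine (norm_sum_le _ _).trans ?_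
          refine Finset.sum_le_sum fun i _ => ?_
          refine (norm_sum_le _ _).trans ?_
          refine Finset.sum_le_sum fun j _ => ?_
          rw [norm_mul, Complex.norm_real, Real.norm_eq_abs, abs_of_nonneg (hw_nonneg i j)]
          exact mul_le_mul_of_nonneg_left (hblock i j) (hw_nonneg i j)
      _ ≤ ∑ i, ∑ j, w i j * ((N i + N j) / 2) := by
          refine Finset.sum_le_sum fun i _ => Finset.sum_le_sum fun j _ => ?_
          refine mul_le_mul_of_nonneg_left ?_ (hw_nonneg i j)
          nlinarith [sq_nonneg (Real.sqrt (N i) - Real.sqrt (N j)),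
            Real.sq_sqrt (hNnn i), Real.sq_sqrt (hNnn j)]
      _ = T := by
          have e1 : ∑ i, ∑ j, w i j * N i = T := by
            rw [hT]
            exact Finset.sum_congr rfl fun i _ => by rw [Finset.sum_mul]
          have e2 : ∑ i, ∑ j, w i j * N j = T := by
            rw [Finset.sum_comm]
            rw [hT]
            refine Finset.sum_congr rfl fun j _ => ?_
            rw [Finset.sum_mul]
            refine Finset.sum_congr rfl fun i _ => ?_
            rw [hw_symm i j]
          calc ∑ i, ∑ j, w i j * ((N i + N j) / 2)
              = ∑ i, ∑ j, (w i j * N i / 2 + w i j * N j / 2) := by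
                refine Finset.sum_congr rfl fun i _ => Finset.sum_congr rfl fun j _ => by ring
            _ = (∑ i, ∑ j, w i j * N i) / 2 + (∑ i, ∑ j, w i j * N j) / 2 := by
                rw [Finset.sum_div, Finset.sum_div, ← Finset.sum_add_distrib]
                refine Finset.sum_congr rfl fun i _ => by
                  rw [Finset.sum_div, Finset.sum_div, ← Finset.sum_add_distrib]
            _ = T / 2 + T / 2 := by rw [e1, e2]
            _ = T := by ring
  -- positivity of T
  have hTpos : 0 < T := by
    obtain ⟨p, hp⟩ := Function.ne_iff.mp hv0
    rw [hT]
    refine Finset.sum_pos' (fun i _ => mul_nonneg (hd i).le (hNnn i))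
      ⟨p.1, Finset.mem_univ _, ?_⟩
    refine mul_pos (hd p.1) ?_
    rw [hN]
    refine Finset.sum_pos' (fun a _ => Complex.normSq_nonneg _)
      ⟨p.2, Finset.mem_univ _, ?_⟩
    simpa using Complex.normSq_pos.mpr hp
  have hfin : ‖μ‖ * T ≤ 1 * T := by
    rw [one_mul]
    have := habs
    rwa [norm_mul, Complex.norm_real, Real.norm_eq_abs, abs_of_nonneg hTpos.le] at this
  exact le_of_mul_le_mul_right hfin hTpos
end

section
/- If G is a connected coherent matrix-weighted network, the consensus dynamics ẏ = −ℒy converges as t → ∞ to the steady state y_j* = S_{σ(j)1} ȳ(0)/n for every node j, where ȳ(0) = Σ_{i=1}^n S_{1σ(i)} y_i(0). -/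
open Matrix Kronecker Filter

variable {n nd m : ℕ}

section Lemmas
open Matrix
variable {n nd m : ℕ}

lemma pt_append (R : Fin n → Fin n → Matrix (Fin nd) (Fin nd) ℝ)
    (p : List (Fin n)) (i j : Fin n) :
    pathTransform R (p ++ [i, j]) = pathTransform R (p ++ [i]) * R i j := by
  induction p with
  | nil => simp [pathTransform]
  | cons a p ih =>
    cases p with
    | nil => simp [pathTransform, mul_assoc]
    | cons b p' =>
      simp only [List.cons_append, pathTransform, List.append_eq] at *
      rw [ih, mul_assoc]

lemma pt_reverse {R : Fin n → Fin n → Matrix (Fin nd) (Fin nd) ℝ}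
    (hrec : ∀ i j, R i j = (R j i)ᵀ) (p : List (Fin n)) :
    pathTransform R p.reverse = (pathTransform R p)ᵀ := by
  induction p with
  | nil => simp [pathTransform]
  | cons i p ih =>
    cases p with
    | nil => simp [pathTransform]
    | cons j rest =>
      have h1 : (i :: j :: rest).reverse = rest.reverse ++ [j, i] := by simp
      have h2 : (j :: rest).reverse = rest.reverse ++ [j] := by simp
      rw [h1, pt_append, ← h2, ih]
      show (pathTransform R (j :: rest))ᵀ * R j i = (pathTransform R (i :: j :: rest))ᵀ
      rw [show pathTransform R (i :: j :: rest) = R i j * pathTransform R (j :: rest) from rfl,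
        Matrix.transpose_mul, hrec j i]

lemma pt_orth {R : Fin n → Fin n → Matrix (Fin nd) (Fin nd) ℝ}
    {E : Fin n → Fin n → Prop}
    (horth : ∀ i j, E i j → R i j * (R i j)ᵀ = 1) :
    ∀ p : List (Fin n), p.Chain' E →
      pathTransform R p * (pathTransform R p)ᵀ = 1 := by
  intro p
  induction p with
  | nil => simp [pathTransform]
  | cons i p ih =>
    cases p with
    | nil => simp [pathTransform]
    | cons j rest =>
      intro hc
      simp only [List.Chain', List.isChain_cons_cons] at hc
      show (R i j * pathTransform R (j :: rest)) * (R i j * pathTransform R (j :: rest))ᵀ = 1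
      rw [Matrix.transpose_mul]
      calc R i j * pathTransform R (j :: rest) *
            ((pathTransform R (j :: rest))ᵀ * (R i j)ᵀ)
          = R i j * (pathTransform R (j :: rest) * (pathTransform R (j :: rest))ᵀ) * (R i j)ᵀ := by
            noncomm_ring
        _ = 1 := by rw [ih hc.2, mul_one, horth i j hc.1]

lemma path_rel {R : Fin n → Fin n → Matrix (Fin nd) (Fin nd) ℝ}
    {E : Fin n → Fin n → Prop} {v : Fin n × Fin nd → ℝ}
    (hedge : ∀ i j, E i j → ∀ a, v (i, a) = ∑ b, R i j a b * v (j, b)) :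
    ∀ (p : List (Fin n)) (i j : Fin n), IsPathFrom E i j p →
      ∀ a, v (i, a) = ∑ b, pathTransform R p a b * v (j, b) := by
  intro p
  induction p with
  | nil => intro i j h; exact absurd h.2.1 (by simp)
  | cons x p ih =>
    intro i j h a
    obtain ⟨hc, hh, hl⟩ := h
    simp only [List.head?_cons, Option.some.injEq] at hh
    subst hh
    cases p with
    | nil =>
      simp only [List.getLast?_singleton, Option.some.injEq] at hl
      subst hl
      simp [pathTransform, Matrix.one_apply]
    | cons y rest =>
      simp only [List.Chain', List.isChain_cons_cons] at hc
      have hlast : (y :: rest).getLast? = some j := by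
        rwa [List.getLast?_cons_cons] at hl
      have hih := ih y j ⟨hc.2, rfl, hlast⟩
      rw [hedge x y hc.1 a]
      show ∑ b, R x y a b * v (y, b)
          = ∑ b, (R x y * pathTransform R (y :: rest)) a b * v (j, b)
      calc ∑ b, R x y a b * v (y, b)
          = ∑ b, ∑ c, R x y a b * (pathTransform R (y :: rest) b c * v (j, c)) := by
            refine Finset.sum_congr rfl fun b _ => ?_
            rw [hih b, Finset.mul_sum]
        _ = ∑ c, (∑ b, R x y a b * pathTransform R (y :: rest) b c) * v (j, c) := by
            rw [Finset.sum_comm]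
            refine Finset.sum_congr rfl fun c _ => ?_
            rw [Finset.sum_mul]
            exact Finset.sum_congr rfl fun b _ => by ring
        _ = ∑ b, (R x y * pathTransform R (y :: rest)) a b * v (j, b) := by
            refine Finset.sum_congr rfl fun b _ => ?_
            rw [Matrix.mul_apply]

end Lemmas
section Lap
open Matrix
variable {n nd : ℕ}

lemma supraLap_apply (w : Fin n → Fin n → ℝ)
    (R : Fin n → Fin n → Matrix (Fin nd) (Fin nd) ℝ) (p q : Fin n × Fin nd) :
    supraLap w R p q =
      (if p.1 = q.1 then (∑ j, w p.1 j) * (if p.2 = q.2 then 1 else 0) else 0)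
        - w p.1 q.1 * R p.1 q.1 p.2 q.2 := by
  rcases p with ⟨i, a⟩; rcases q with ⟨j, b⟩
  simp only [supraLap, supra, Matrix.sub_apply, Matrix.kroneckerMap_apply,
    Matrix.diagonal, Matrix.one_apply, Matrix.of_apply, Matrix.smul_apply, smul_eq_mul]
  by_cases h1 : i = j <;> by_cases h2 : a = b <;> simp [h1, h2]

lemma supraLap_mulVec (w : Fin n → Fin n → ℝ)
    (R : Fin n → Fin n → Matrix (Fin nd) (Fin nd) ℝ)
    (v : Fin n × Fin nd → ℝ) (i : Fin n) (a : Fin nd) :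
    (supraLap w R *ᵥ v) (i, a)
      = ∑ j, w i j * (v (i, a) - ∑ b, R i j a b * v (j, b)) := by
  have h0 : (supraLap w R *ᵥ v) (i, a) = ∑ r : Fin n × Fin nd, supraLap w R (i, a) r * v r := rfl
  rw [h0, Fintype.sum_prod_type]
  have step : ∀ j b, supraLap w R (i, a) (j, b) * v (j, b)
      = (if i = j then (∑ k, w i k) * (if a = b then 1 else 0) else 0) * v (j, b)
        - w i j * R i j a b * v (j, b) := by
    intro j b; rw [supraLap_apply]; ring
  simp only [step]
  rw [Finset.sum_congr rfl fun j _ => Finset.sum_sub_distrib _ _, Finset.sum_sub_distrib]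
  have h1 : ∑ j, ∑ b, (if i = j then (∑ k, w i k) * (if a = b then 1 else 0) else 0) * v (j, b)
      = ∑ j, w i j * v (i, a) := by
    rw [Finset.sum_eq_single i]
    · rw [Finset.sum_eq_single a]
      · simp [Finset.sum_mul]
      · intro b _ hb; simp [Ne.symm hb]
      · simp
    · intro j _ hj; simp [Ne.symm hj]
    · simp
  rw [h1, ← Finset.sum_sub_distrib]
  refine Finset.sum_congr rfl fun j _ => ?_
  rw [mul_sub, Finset.mul_sum]
  congr 1
  exact Finset.sum_congr rfl fun b _ => by ring

end Lap
section Edge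
open Matrix
variable {n nd m : ℕ}

lemma edge_RRT {w : Fin n → Fin n → ℝ} {R : Fin n → Fin n → Matrix (Fin nd) (Fin nd) ℝ}
    (hw_symm : ∀ i j, w i j = w j i) (hrec : ∀ i j, R i j = (R j i)ᵀ)
    (hcoh : Coherent (fun i j => w i j ≠ 0) R) :
    ∀ i j, w i j ≠ 0 → R i j * (R i j)ᵀ = 1 := by
  intro i j hij
  have hji : w j i ≠ 0 := by rw [← hw_symm i j]; exact hij
  have hp : IsPathFrom (fun i j => w i j ≠ 0) i i [i, j, i] := by
    refine ⟨?_, rfl, by simp⟩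
    exact List.isChain_cons_cons.mpr ⟨hij, List.isChain_cons_cons.mpr ⟨hji, List.isChain_singleton i⟩⟩
  have h := hcoh i [i, j, i] hp
  have h2 : pathTransform R [i, j, i] = R i j * (R j i * 1) := rfl
  rw [h2, mul_one] at h
  rw [← hrec j i]
  exact h

lemma edge_S [NeZero n] {w : Fin n → Fin n → ℝ}
    {R : Fin n → Fin n → Matrix (Fin nd) (Fin nd) ℝ}
    {σ : Fin n → Fin m} {S : Fin m → Fin m → Matrix (Fin nd) (Fin nd) ℝ}
    (hconn : Connected (fun i j => w i j ≠ 0))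
    (hS : ∀ i j q, IsPathFrom (fun i j => w i j ≠ 0) i j q →
      S (σ i) (σ j) = pathTransform R q) :
    ∀ i j, w i j ≠ 0 → S (σ i) (σ 0) = R i j * S (σ j) (σ 0) := by
  intro i j hij
  obtain ⟨q, hc, hh, hl⟩ := hconn j 0
  cases q with
  | nil => simp at hh
  | cons y rest =>
    simp only [List.head?_cons, Option.some.injEq] at hh
    subst hh
    have hp : IsPathFrom (fun i j => w i j ≠ 0) i 0 (i :: y :: rest) :=
      ⟨List.isChain_cons_cons.mpr ⟨hij, hc⟩, rfl, by rwa [List.getLast?_cons_cons]⟩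
    rw [hS i 0 _ hp, hS y 0 _ ⟨hc, rfl, hl⟩]
    rfl

lemma S0_orth [NeZero n] {w : Fin n → Fin n → ℝ}
    {R : Fin n → Fin n → Matrix (Fin nd) (Fin nd) ℝ}
    {σ : Fin n → Fin m} {S : Fin m → Fin m → Matrix (Fin nd) (Fin nd) ℝ}
    (hw_symm : ∀ i j, w i j = w j i) (hrec : ∀ i j, R i j = (R j i)ᵀ)
    (hcoh : Coherent (fun i j => w i j ≠ 0) R)
    (hconn : Connected (fun i j => w i j ≠ 0))
    (hS : ∀ i j q, IsPathFrom (fun i j => w i j ≠ 0) i j q →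
      S (σ i) (σ j) = pathTransform R q) :
    ∀ i, S (σ i) (σ 0) * (S (σ i) (σ 0))ᵀ = 1 := by
  intro i
  obtain ⟨p, hp⟩ := hconn i 0
  rw [hS i 0 p hp]
  exact pt_orth (edge_RRT hw_symm hrec hcoh) p hp.1

lemma S0_rev [NeZero n] {w : Fin n → Fin n → ℝ}
    {R : Fin n → Fin n → Matrix (Fin nd) (Fin nd) ℝ}
    {σ : Fin n → Fin m} {S : Fin m → Fin m → Matrix (Fin nd) (Fin nd) ℝ}
    (hw_symm : ∀ i j, w i j = w j i) (hrec : ∀ i j, R i j = (R j i)ᵀ)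
    (hconn : Connected (fun i j => w i j ≠ 0))
    (hS : ∀ i j q, IsPathFrom (fun i j => w i j ≠ 0) i j q →
      S (σ i) (σ j) = pathTransform R q) :
    ∀ i, S (σ 0) (σ i) = (S (σ i) (σ 0))ᵀ := by
  intro i
  obtain ⟨p, hc, hh, hl⟩ := hconn 0 i
  have hrev : IsPathFrom (fun i j => w i j ≠ 0) i 0 p.reverse := by
    refine ⟨?_, ?_, ?_⟩
    · simp only [List.Chain', List.isChain_reverse]
      exact hc.imp fun a b hab => by
        show w b a ≠ 0
        rw [hw_symm b a]; exact hab
    · rw [List.head?_reverse]; exact hl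
    · rw [List.getLast?_reverse]; exact hh
  rw [hS 0 i p ⟨hc, hh, hl⟩, hS i 0 _ hrev, pt_reverse hrec, Matrix.transpose_transpose]

lemma orth_sq {nd : ℕ} (M : Matrix (Fin nd) (Fin nd) ℝ) (hM : Mᵀ * M = 1)
    (x : Fin nd → ℝ) :
    ∑ a, (∑ b, M a b * x b) ^ 2 = ∑ b, (x b) ^ 2 := by
  have key : ∀ b c, ∑ a, M a b * M a c = if b = c then 1 else 0 := by
    intro b c
    have h := congrFun (congrFun hM b) c
    rw [Matrix.mul_apply] at h
    simp only [Matrix.transpose_apply] at h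
    rw [h, Matrix.one_apply]
  calc ∑ a, (∑ b, M a b * x b) ^ 2
      = ∑ a, ∑ b, ∑ c, (M a b * x b) * (M a c * x c) := by
        refine Finset.sum_congr rfl fun a _ => ?_
        rw [sq, Finset.sum_mul_sum]
    _ = ∑ b, ∑ c, (∑ a, M a b * M a c) * (x b * x c) := by
        rw [Finset.sum_comm]
        refine Finset.sum_congr rfl fun b _ => ?_
        rw [Finset.sum_comm]
        refine Finset.sum_congr rfl fun c _ => ?_
        rw [Finset.sum_mul]
        exact Finset.sum_congr rfl fun a _ => by ring
    _ = ∑ b, (x b) ^ 2 := by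
        refine Finset.sum_congr rfl fun b _ => ?_
        rw [Finset.sum_congr rfl fun c (_ : c ∈ Finset.univ) => by rw [key b c]]
        simp [ite_mul, sq]

lemma lap_quadform {w : Fin n → Fin n → ℝ}
    {R : Fin n → Fin n → Matrix (Fin nd) (Fin nd) ℝ}
    (hw_symm : ∀ i j, w i j = w j i)
    (horth : ∀ i j, w i j ≠ 0 → R i j * (R i j)ᵀ = 1)
    (v : Fin n × Fin nd → ℝ) :
    2 * (v ⬝ᵥ (supraLap w R *ᵥ v))
      = ∑ i, ∑ j, w i j * ∑ a, (v (i, a) - ∑ b, R i j a b * v (j, b)) ^ 2 := by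
  have hdot : v ⬝ᵥ (supraLap w R *ᵥ v)
      = ∑ i, ∑ j, w i j * ∑ a, v (i, a) * (v (i, a) - ∑ b, R i j a b * v (j, b)) := by
    calc v ⬝ᵥ (supraLap w R *ᵥ v)
        = ∑ i, ∑ a, v (i, a) * (supraLap w R *ᵥ v) (i, a) := by
          rw [dotProduct, Fintype.sum_prod_type]
      _ = ∑ i, ∑ a, ∑ j, w i j * (v (i, a) * (v (i, a) - ∑ b, R i j a b * v (j, b))) := by
          refine Finset.sum_congr rfl fun i _ => Finset.sum_congr rfl fun a _ => ?_
          rw [supraLap_mulVec, Finset.mul_sum]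
          exact Finset.sum_congr rfl fun j _ => by ring
      _ = ∑ i, ∑ j, w i j * ∑ a, v (i, a) * (v (i, a) - ∑ b, R i j a b * v (j, b)) := by
          refine Finset.sum_congr rfl fun i _ => ?_
          rw [Finset.sum_comm]
          exact Finset.sum_congr rfl fun j _ => (Finset.mul_sum _ _ _).symm
  -- third-term identity
  have hthird : ∑ i, ∑ j, w i j * ∑ a, (∑ b, R i j a b * v (j, b)) ^ 2
      = ∑ i, ∑ j, w i j * ∑ a, (v (i, a)) ^ 2 := by
    have step1 : ∀ i j, w i j * ∑ a, (∑ b, R i j a b * v (j, b)) ^ 2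
        = w i j * ∑ b, (v (j, b)) ^ 2 := by
      intro i j
      by_cases hij : w i j = 0
      · rw [hij, zero_mul, zero_mul]
      · congr 1
        exact orth_sq (R i j) (mul_eq_one_comm.mp (horth i j hij)) _
    calc ∑ i, ∑ j, w i j * ∑ a, (∑ b, R i j a b * v (j, b)) ^ 2
        = ∑ i, ∑ j, w i j * ∑ b, (v (j, b)) ^ 2 := by
          exact Finset.sum_congr rfl fun i _ => Finset.sum_congr rfl fun j _ => step1 i j
      _ = ∑ j, ∑ i, w j i * ∑ b, (v (j, b)) ^ 2 := by
          rw [Finset.sum_comm]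
          exact Finset.sum_congr rfl fun j _ => Finset.sum_congr rfl fun i _ => by
            rw [hw_symm i j]
      _ = ∑ i, ∑ j, w i j * ∑ a, (v (i, a)) ^ 2 := rfl
  have key : ∀ i j, 2 * (w i j * ∑ a, v (i, a) * (v (i, a) - ∑ b, R i j a b * v (j, b)))
      = w i j * ∑ a, (v (i, a) - ∑ b, R i j a b * v (j, b)) ^ 2
        + (w i j * ∑ a, (v (i, a)) ^ 2
          - w i j * ∑ a, (∑ b, R i j a b * v (j, b)) ^ 2) := by
    intro i j
    have hsum : 2 * ∑ a, v (i, a) * (v (i, a) - ∑ b, R i j a b * v (j, b))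
        = ∑ a, (v (i, a) - ∑ b, R i j a b * v (j, b)) ^ 2
          + (∑ a, (v (i, a)) ^ 2 - ∑ a, (∑ b, R i j a b * v (j, b)) ^ 2) := by
      rw [Finset.mul_sum, ← Finset.sum_sub_distrib, ← Finset.sum_add_distrib]
      exact Finset.sum_congr rfl fun a _ => by ring
    calc 2 * (w i j * ∑ a, v (i, a) * (v (i, a) - ∑ b, R i j a b * v (j, b)))
        = w i j * (2 * ∑ a, v (i, a) * (v (i, a) - ∑ b, R i j a b * v (j, b))) := by ring
      _ = w i j * (∑ a, (v (i, a) - ∑ b, R i j a b * v (j, b)) ^ 2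
            + (∑ a, (v (i, a)) ^ 2 - ∑ a, (∑ b, R i j a b * v (j, b)) ^ 2)) := by rw [hsum]
      _ = _ := by ring
  calc 2 * (v ⬝ᵥ (supraLap w R *ᵥ v))
      = ∑ i, ∑ j, 2 * (w i j * ∑ a, v (i, a) * (v (i, a) - ∑ b, R i j a b * v (j, b))) := by
        rw [hdot, Finset.mul_sum]
        exact Finset.sum_congr rfl fun i _ => Finset.mul_sum _ _ _
    _ = ∑ i, ∑ j, (w i j * ∑ a, (v (i, a) - ∑ b, R i j a b * v (j, b)) ^ 2
          + (w i j * ∑ a, (v (i, a)) ^ 2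
            - w i j * ∑ a, (∑ b, R i j a b * v (j, b)) ^ 2)) := by
        exact Finset.sum_congr rfl fun i _ => Finset.sum_congr rfl fun j _ => key i j
    _ = (∑ i, ∑ j, w i j * ∑ a, (v (i, a) - ∑ b, R i j a b * v (j, b)) ^ 2)
          + ((∑ i, ∑ j, w i j * ∑ a, (v (i, a)) ^ 2)
            - (∑ i, ∑ j, w i j * ∑ a, (∑ b, R i j a b * v (j, b)) ^ 2)) := by
        rw [Finset.sum_congr rfl fun i (_ : i ∈ Finset.univ) => Finset.sum_add_distrib,
          Finset.sum_add_distrib,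
          Finset.sum_congr rfl fun i (_ : i ∈ Finset.univ) => Finset.sum_sub_distrib _ _,
          Finset.sum_sub_distrib]
    _ = ∑ i, ∑ j, w i j * ∑ a, (v (i, a) - ∑ b, R i j a b * v (j, b)) ^ 2 := by
        rw [hthird, sub_self, add_zero]

end Edge
section Kernel
open Matrix
variable {n nd m : ℕ}

lemma kernel_edge {w : Fin n → Fin n → ℝ}
    {R : Fin n → Fin n → Matrix (Fin nd) (Fin nd) ℝ}
    (hw_symm : ∀ i j, w i j = w j i) (hw_nonneg : ∀ i j, 0 ≤ w i j)
    (horth : ∀ i j, w i j ≠ 0 → R i j * (R i j)ᵀ = 1)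
    {v : Fin n × Fin nd → ℝ} (hv : supraLap w R *ᵥ v = 0) :
    ∀ i j, w i j ≠ 0 → ∀ a, v (i, a) = ∑ b, R i j a b * v (j, b) := by
  have hq : ∑ i, ∑ j, w i j * ∑ a, (v (i, a) - ∑ b, R i j a b * v (j, b)) ^ 2 = 0 := by
    rw [← lap_quadform hw_symm horth v, hv, dotProduct_zero, mul_zero]
  have hnn : ∀ i j, 0 ≤ w i j * ∑ a, (v (i, a) - ∑ b, R i j a b * v (j, b)) ^ 2 := by
    intro i j
    exact mul_nonneg (hw_nonneg i j) (Finset.sum_nonneg fun a _ => sq_nonneg _)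
  have hzero : ∀ i j, w i j * ∑ a, (v (i, a) - ∑ b, R i j a b * v (j, b)) ^ 2 = 0 := by
    intro i j
    have h1 : ∀ i ∈ Finset.univ, (0:ℝ) ≤ ∑ j, w i j * ∑ a, (v (i, a) - ∑ b, R i j a b * v (j, b)) ^ 2 :=
      fun i _ => Finset.sum_nonneg fun j _ => hnn i j
    have h2 := (Finset.sum_eq_zero_iff_of_nonneg h1).mp hq i (Finset.mem_univ i)
    exact (Finset.sum_eq_zero_iff_of_nonneg fun j _ => hnn i j).mp h2 j (Finset.mem_univ j)
  intro i j hij a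
  have hw : 0 < w i j := lt_of_le_of_ne (hw_nonneg i j) (Ne.symm hij)
  have hsq : ∑ a, (v (i, a) - ∑ b, R i j a b * v (j, b)) ^ 2 = 0 := by
    rcases mul_eq_zero.mp (hzero i j) with h | h
    · exact absurd h hij
    · exact h
  have := (Finset.sum_eq_zero_iff_of_nonneg fun a _ => sq_nonneg _).mp hsq a (Finset.mem_univ a)
  have := pow_eq_zero_iff (n := 2) (by norm_num) |>.mp this
  linarith [this]

/-- The candidate limit projection matrix. -/
noncomputable def Qmat [NeZero n] (σ : Fin n → Fin m)
    (S : Fin m → Fin m → Matrix (Fin nd) (Fin nd) ℝ) :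
    Matrix (Fin n × Fin nd) (Fin n × Fin nd) ℝ :=
  fun p q => (∑ c, S (σ p.1) (σ 0) p.2 c * S (σ q.1) (σ 0) q.2 c) / n

lemma Qmat_symm [NeZero n] (σ : Fin n → Fin m)
    (S : Fin m → Fin m → Matrix (Fin nd) (Fin nd) ℝ) :
    (Qmat σ S)ᵀ = Qmat σ S := by
  ext p q
  simp only [Qmat, Matrix.transpose_apply]
  congr 1
  exact Finset.sum_congr rfl fun c _ => mul_comm _ _

lemma lap_mul_Q [NeZero n] {w : Fin n → Fin n → ℝ}
    {R : Fin n → Fin n → Matrix (Fin nd) (Fin nd) ℝ}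
    {σ : Fin n → Fin m} {S : Fin m → Fin m → Matrix (Fin nd) (Fin nd) ℝ}
    (hedgeS : ∀ i j, w i j ≠ 0 → S (σ i) (σ 0) = R i j * S (σ j) (σ 0)) :
    supraLap w R * Qmat σ S = 0 := by
  ext ⟨i, a⟩ q
  have h0 : (supraLap w R * Qmat σ S) (i, a) q
      = (supraLap w R *ᵥ fun r => Qmat σ S r q) (i, a) := rfl
  rw [h0, supraLap_mulVec, Matrix.zero_apply]
  refine Finset.sum_eq_zero fun j _ => ?_
  by_cases hij : w i j = 0
  · rw [hij, zero_mul]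
  · have hSij := hedgeS i j hij
    have hkey : Qmat σ S (i, a) q = ∑ b, R i j a b * Qmat σ S (j, b) q := by
      simp only [Qmat]
      have hb : ∀ b : Fin nd,
          R i j a b * ((∑ c, S (σ j) (σ 0) b c * S (σ q.1) (σ 0) q.2 c) / n)
          = (∑ c, R i j a b * (S (σ j) (σ 0) b c * S (σ q.1) (σ 0) q.2 c)) / n := by
        intro b
        rw [← mul_div_assoc, Finset.mul_sum]
      rw [Finset.sum_congr rfl fun b _ => hb b, ← Finset.sum_div]
      congr 1
      calc ∑ c, S (σ i) (σ 0) a c * S (σ q.1) (σ 0) q.2 c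
          = ∑ c, ∑ b, R i j a b * (S (σ j) (σ 0) b c * S (σ q.1) (σ 0) q.2 c) := by
            refine Finset.sum_congr rfl fun c _ => ?_
            rw [show S (σ i) (σ 0) a c = (R i j * S (σ j) (σ 0)) a c from by rw [← hSij],
              Matrix.mul_apply, Finset.sum_mul]
            exact Finset.sum_congr rfl fun b _ => by ring
        _ = ∑ b, ∑ c, R i j a b * (S (σ j) (σ 0) b c * S (σ q.1) (σ 0) q.2 c) :=
            Finset.sum_comm
    show w i j * (Qmat σ S (i, a) q - ∑ b, R i j a b * Qmat σ S (j, b) q) = 0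
    rw [hkey, sub_self, mul_zero]

lemma Q_fixes_kernel [NeZero n] {w : Fin n → Fin n → ℝ}
    {R : Fin n → Fin n → Matrix (Fin nd) (Fin nd) ℝ}
    {σ : Fin n → Fin m} {S : Fin m → Fin m → Matrix (Fin nd) (Fin nd) ℝ}
    (hw_symm : ∀ i j, w i j = w j i) (hw_nonneg : ∀ i j, 0 ≤ w i j)
    (hrec : ∀ i j, R i j = (R j i)ᵀ)
    (hcoh : Coherent (fun i j => w i j ≠ 0) R)
    (hconn : Connected (fun i j => w i j ≠ 0))
    (hS : ∀ i j q, IsPathFrom (fun i j => w i j ≠ 0) i j q →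
      S (σ i) (σ j) = pathTransform R q)
    {v : Fin n × Fin nd → ℝ} (hv : supraLap w R *ᵥ v = 0) :
    Qmat σ S *ᵥ v = v := by
  have horth := edge_RRT hw_symm hrec hcoh
  have hedge := kernel_edge hw_symm hw_nonneg horth hv
  -- representation of v by the value at node 0
  have hrep : ∀ i a, v (i, a) = ∑ b, S (σ i) (σ 0) a b * v (0, b) := by
    intro i a
    obtain ⟨p, hp⟩ := hconn i 0
    rw [hS i 0 p hp]
    exact path_rel hedge p i 0 hp a
  have hSorth := S0_orth hw_symm hrec hcoh hconn hS
  ext ⟨i, a⟩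
  have h0 : (Qmat σ S *ᵥ v) (i, a) = ∑ j, ∑ b, Qmat σ S (i, a) (j, b) * v (j, b) := by
    rw [show (Qmat σ S *ᵥ v) (i, a) = ∑ r : Fin n × Fin nd, Qmat σ S (i, a) r * v r from rfl,
      Fintype.sum_prod_type]
  rw [h0]
  have hinner : ∀ j : Fin n, ∑ b, Qmat σ S (i, a) (j, b) * v (j, b)
      = (∑ c, S (σ i) (σ 0) a c * v (0, c)) / n := by
    intro j
    have hST : ∀ c d : Fin nd, ∑ b, S (σ j) (σ 0) b c * S (σ j) (σ 0) b d
        = if c = d then 1 else 0 := by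
      intro c d
      have h1 := mul_eq_one_comm.mp (hSorth j)
      have h2 := congrFun (congrFun h1 c) d
      rw [Matrix.mul_apply] at h2
      simp only [Matrix.transpose_apply] at h2
      rw [h2, Matrix.one_apply]
    calc ∑ b, Qmat σ S (i, a) (j, b) * v (j, b)
        = ∑ b, ∑ c, ∑ d, (S (σ i) (σ 0) a c * v (0, d) / n)
            * (S (σ j) (σ 0) b c * S (σ j) (σ 0) b d) := by
          refine Finset.sum_congr rfl fun b _ => ?_
          rw [show Qmat σ S (i, a) (j, b)
              = (∑ c, S (σ i) (σ 0) a c * S (σ j) (σ 0) b c) / n from rfl,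
            hrep j b, Finset.sum_div, Finset.sum_mul]
          refine Finset.sum_congr rfl fun c _ => ?_
          rw [Finset.mul_sum]
          exact Finset.sum_congr rfl fun d _ => by ring
      _ = ∑ c, ∑ d, (S (σ i) (σ 0) a c * v (0, d) / n)
            * (∑ b, S (σ j) (σ 0) b c * S (σ j) (σ 0) b d) := by
          rw [Finset.sum_comm]
          refine Finset.sum_congr rfl fun c _ => ?_
          rw [Finset.sum_comm]
          refine Finset.sum_congr rfl fun d _ => ?_
          rw [Finset.mul_sum]
      _ = (∑ c, S (σ i) (σ 0) a c * v (0, c)) / n := by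
          rw [Finset.sum_div]
          refine Finset.sum_congr rfl fun c _ => ?_
          rw [Finset.sum_congr rfl fun d (_ : d ∈ Finset.univ) => by rw [hST c d]]
          simp [mul_ite, div_eq_mul_inv]
  rw [Finset.sum_congr rfl fun j _ => hinner j, Finset.sum_const, Finset.card_univ,
    Fintype.card_fin, nsmul_eq_mul]
  rw [mul_div_cancel₀ _ (by exact_mod_cast (Nat.pos_of_ne_zero (NeZero.ne n)).ne' : (n:ℝ) ≠ 0)]
  exact (hrep i a).symm

end Kernel
section Spectral
open Matrix

lemma conj_diag_apply {ι : Type*} [Fintype ι] [DecidableEq ι]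
    (U : Matrix ι ι ℝ) (d : ι → ℝ) (p q : ι) :
    (U * diagonal d * star U) p q = ∑ k, U p k * d k * U q k := by
  rw [Matrix.mul_apply]
  refine Finset.sum_congr rfl fun k _ => ?_
  rw [Matrix.mul_diagonal, Matrix.star_apply, star_trivial]

lemma tendsto_exp_psd {ι : Type*} [Fintype ι] [DecidableEq ι]
    (A : Matrix ι ι ℝ) (hA : A.PosSemidef) :
    Filter.Tendsto (fun t : ℝ => NormedSpace.exp ((-t) • A)) Filter.atTop
      (nhds ((hA.1.eigenvectorUnitary : Matrix ι ι ℝ)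
        * diagonal (fun k => if hA.1.eigenvalues k = 0 then (1:ℝ) else 0)
        * star (hA.1.eigenvectorUnitary : Matrix ι ι ℝ))) := by
  set U : Matrix ι ι ℝ := (hA.1.eigenvectorUnitary : Matrix ι ι ℝ) with hU
  set μ : ι → ℝ := hA.1.eigenvalues with hμ
  have hU1 : star U * U = 1 := Matrix.mem_unitaryGroup_iff'.mp hA.1.eigenvectorUnitary.2
  have hU2 : U * star U = 1 := Matrix.mem_unitaryGroup_iff.mp hA.1.eigenvectorUnitary.2
  have hUinv : U⁻¹ = star U := Matrix.inv_eq_left_inv hU1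
  have hUunit : IsUnit U := ⟨⟨U, star U, hU2, hU1⟩, rfl⟩
  have hspec : A = U * diagonal μ * star U := by
    have := hA.1.spectral_theorem
    exact this.trans (by rw [Unitary.conjStarAlgAut_apply]; rfl)
  have hexp : ∀ t : ℝ, NormedSpace.exp ((-t) • A)
      = U * diagonal (fun k => Real.exp (-t * μ k)) * star U := by
    intro t
    have hconj : (-t) • A = U * diagonal (fun k => -t * μ k) * star U := by
      rw [hspec, ← smul_mul_assoc, ← mul_smul_comm, ← Matrix.diagonal_smul]
      congr 1
    rw [hconj, ← hUinv, Matrix.exp_conj U (diagonal fun k => -t * μ k) hUunit, Matrix.exp_diagonal]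
    simp only [Pi.exp_def, ← Real.exp_eq_exp_ℝ]
  refine tendsto_pi_nhds.mpr fun p => ?_
  rw [tendsto_pi_nhds]
  intro q
  simp only [hexp, conj_diag_apply]
  apply tendsto_finset_sum
  intro k _
  by_cases hk : μ k = 0
  · simp only [hk, mul_zero, neg_zero, Real.exp_zero, if_pos]
    exact tendsto_const_nhds
  · have hkpos : 0 < μ k := lt_of_le_of_ne (hA.eigenvalues_nonneg k) (Ne.symm hk)
    have h2 : Filter.Tendsto (fun t : ℝ => t * μ k) Filter.atTop Filter.atTop :=
      Filter.Tendsto.atTop_mul_const hkpos Filter.tendsto_id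
    have h1 : Filter.Tendsto (fun t : ℝ => Real.exp (-t * μ k)) Filter.atTop (nhds 0) := by
      have hfun : (fun t : ℝ => Real.exp (-t * μ k))
          = (fun x : ℝ => Real.exp (-x)) ∘ (fun t : ℝ => t * μ k) := by
        funext t; simp [Function.comp, neg_mul]
      rw [hfun]
      exact Real.tendsto_exp_neg_atTop_nhds_zero.comp h2
    simpa [hk] using (h1.const_mul (U p k)).mul_const (U q k)

end Spectral
section PSD
open Matrix
variable {n nd : ℕ}

lemma lap_isHermitian {w : Fin n → Fin n → ℝ}
    {R : Fin n → Fin n → Matrix (Fin nd) (Fin nd) ℝ}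
    (hw_symm : ∀ i j, w i j = w j i) (hrec : ∀ i j, R i j = (R j i)ᵀ) :
    (supraLap w R).IsHermitian := by
  show (supraLap w R)ᴴ = supraLap w R
  ext ⟨i, a⟩ ⟨j, b⟩
  rw [Matrix.conjTranspose_apply, star_trivial, supraLap_apply, supraLap_apply]
  simp only
  congr 1
  · by_cases h : i = j
    · subst h
      by_cases h2 : a = b
      · subst h2; simp
      · simp [h2, Ne.symm h2]
    · simp [h, Ne.symm h]
  · rw [hw_symm j i, hrec j i, Matrix.transpose_apply]

lemma lap_posSemidef {w : Fin n → Fin n → ℝ}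
    {R : Fin n → Fin n → Matrix (Fin nd) (Fin nd) ℝ}
    (hw_symm : ∀ i j, w i j = w j i) (hw_nonneg : ∀ i j, 0 ≤ w i j)
    (hrec : ∀ i j, R i j = (R j i)ᵀ)
    (horth : ∀ i j, w i j ≠ 0 → R i j * (R i j)ᵀ = 1) :
    (supraLap w R).PosSemidef := by
  refine Matrix.posSemidef_iff_dotProduct_mulVec.mpr ⟨lap_isHermitian hw_symm hrec, fun x => ?_⟩
  have hstar : star x = x := funext fun r => star_trivial _
  rw [hstar]
  have h2 := lap_quadform hw_symm horth x
  have hnn : (0:ℝ) ≤ ∑ i, ∑ j, w i j * ∑ a, (x (i, a) - ∑ b, R i j a b * x (j, b)) ^ 2 :=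
    Finset.sum_nonneg fun i _ => Finset.sum_nonneg fun j _ =>
      mul_nonneg (hw_nonneg i j) (Finset.sum_nonneg fun a _ => sq_nonneg _)
  linarith

end PSD
/-- on a connected coherent network, consensus dynamics
`ẏ = −ℒy` converges to the steady state `y_j* = S_{σ(j)1} ȳ(0)/n`, where
`ȳ(0) = Σ_i S_{1σ(i)} y_i(0)`. -/
theorem stmt12 [NeZero n] (w : Fin n → Fin n → ℝ)
    (R : Fin n → Fin n → Matrix (Fin nd) (Fin nd) ℝ)
    (σ : Fin n → Fin m) (S : Fin m → Fin m → Matrix (Fin nd) (Fin nd) ℝ)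
    (hw_symm : ∀ i j, w i j = w j i) (hw_nonneg : ∀ i j, 0 ≤ w i j)
    (hloop : ∀ i, w i i = 0)
    (hrec : ∀ i j, R i j = (R j i)ᵀ)
    (hcoh : Coherent (fun i j => w i j ≠ 0) R)
    (hconn : Connected (fun i j => w i j ≠ 0))
    (hS : ∀ i j q, IsPathFrom (fun i j => w i j ≠ 0) i j q →
      S (σ i) (σ j) = pathTransform R q)
    (y0 : Fin n × Fin nd → ℝ) :
    Filter.Tendsto
      (fun t : ℝ => (NormedSpace.exp ((-t) • supraLap w R)).mulVec y0)
      Filter.atTop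
      (nhds (fun q : Fin n × Fin nd =>
        (∑ a, S (σ q.1) (σ 0) q.2 a *
          (∑ i, ∑ b, S (σ 0) (σ i) a b * y0 (i, b))) / n)) := by
  have horth := edge_RRT hw_symm hrec hcoh
  have hPSD : (supraLap w R).PosSemidef := lap_posSemidef hw_symm hw_nonneg hrec horth
  have hT := tendsto_exp_psd (supraLap w R) hPSD
  set U : Matrix (Fin n × Fin nd) (Fin n × Fin nd) ℝ :=
    (hPSD.1.eigenvectorUnitary : Matrix (Fin n × Fin nd) (Fin n × Fin nd) ℝ) with hU
  set μ : Fin n × Fin nd → ℝ := hPSD.1.eigenvalues with hμ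
  set L : Matrix (Fin n × Fin nd) (Fin n × Fin nd) ℝ :=
    U * Matrix.diagonal (fun k => if μ k = 0 then (1:ℝ) else 0) * star U with hL
  have hU1 : star U * U = 1 := Matrix.mem_unitaryGroup_iff'.mp hPSD.1.eigenvectorUnitary.2
  have hU2 : U * star U = 1 := Matrix.mem_unitaryGroup_iff.mp hPSD.1.eigenvectorUnitary.2
  have hspec : supraLap w R = U * Matrix.diagonal μ * star U := by
    have := hPSD.1.spectral_theorem
    exact this.trans (by rw [Unitary.conjStarAlgAut_apply]; rfl)
  have hedgeS := edge_S hconn hS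
  have hLQ0 : supraLap w R * Qmat σ S = 0 := lap_mul_Q hedgeS
  have hDQ : Matrix.diagonal μ * (star U * Qmat σ S) = 0 := by
    calc Matrix.diagonal μ * (star U * Qmat σ S)
        = (star U * U) * (Matrix.diagonal μ * (star U * Qmat σ S)) := by rw [hU1, one_mul]
      _ = star U * (U * Matrix.diagonal μ * star U * Qmat σ S) := by noncomm_ring
      _ = star U * (supraLap w R * Qmat σ S) := by rw [← hspec]
      _ = 0 := by rw [hLQ0, Matrix.mul_zero]
  have hD0 : Matrix.diagonal (fun k => if μ k = 0 then (1:ℝ) else 0) * (star U * Qmat σ S)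
      = star U * Qmat σ S := by
    ext k j
    rw [Matrix.diagonal_mul]
    by_cases hk : μ k = 0
    · simp [hk]
    · have h := congrFun (congrFun hDQ k) j
      rw [Matrix.diagonal_mul] at h
      have hM : (star U * Qmat σ S) k j = 0 :=
        (mul_eq_zero.mp h).resolve_left hk
      simp [hk, hM]
  have hLQ : L * Qmat σ S = Qmat σ S := by
    calc L * Qmat σ S
        = U * (Matrix.diagonal (fun k => if μ k = 0 then (1:ℝ) else 0) * (star U * Qmat σ S)) := by
          rw [hL]; noncomm_ring
      _ = U * (star U * Qmat σ S) := by rw [hD0]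
      _ = (U * star U) * Qmat σ S := by noncomm_ring
      _ = Qmat σ S := by rw [hU2, one_mul]
  have hDD : Matrix.diagonal μ * Matrix.diagonal (fun k => if μ k = 0 then (1:ℝ) else 0) = 0 := by
    rw [Matrix.diagonal_mul_diagonal]
    have hfun : (fun k => μ k * (if μ k = 0 then (1:ℝ) else 0)) = fun _ => (0:ℝ) :=
      funext fun k => by by_cases hk : μ k = 0 <;> simp [hk]
    rw [hfun, Matrix.diagonal_zero]
  have hAL : supraLap w R * L = 0 := by
    calc supraLap w R * L
        = U * Matrix.diagonal μ * ((star U * U)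
            * (Matrix.diagonal (fun k => if μ k = 0 then (1:ℝ) else 0) * star U)) := by
          rw [hspec, hL]; noncomm_ring
      _ = U * (Matrix.diagonal μ * Matrix.diagonal (fun k => if μ k = 0 then (1:ℝ) else 0))
            * star U := by rw [hU1, one_mul]; noncomm_ring
      _ = 0 := by rw [hDD, Matrix.mul_zero, Matrix.zero_mul]
  have hQL : Qmat σ S * L = L := by
    have hcol : ∀ q, supraLap w R *ᵥ (fun r => L r q) = 0 := by
      intro q
      funext p
      have h := congrFun (congrFun hAL p) q
      rw [Matrix.mul_apply] at h
      exact h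
    ext p q
    have hfix := Q_fixes_kernel hw_symm hw_nonneg hrec hcoh hconn hS (hcol q)
    calc (Qmat σ S * L) p q = (Qmat σ S *ᵥ fun r => L r q) p := rfl
      _ = L p q := by rw [hfix]
  have hLsym : Lᵀ = L := by
    ext p q
    rw [Matrix.transpose_apply, hL, conj_diag_apply, conj_diag_apply]
    exact Finset.sum_congr rfl fun k _ => by ring
  have hQsym := Qmat_symm σ S
  have hQeqL : Qmat σ S = L := by
    calc Qmat σ S = (Qmat σ S)ᵀ := hQsym.symm
      _ = (L * Qmat σ S)ᵀ := by rw [hLQ]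
      _ = (Qmat σ S)ᵀ * Lᵀ := Matrix.transpose_mul _ _
      _ = Qmat σ S * L := by rw [hQsym, hLsym]
      _ = L := hQL
  -- identify the limit function with `Qmat σ S *ᵥ y0`
  have hSrev := S0_rev hw_symm hrec hconn hS
  have hFQ : (fun q : Fin n × Fin nd =>
      (∑ a, S (σ q.1) (σ 0) q.2 a * (∑ i, ∑ b, S (σ 0) (σ i) a b * y0 (i, b))) / n)
      = Qmat σ S *ᵥ y0 := by
    funext q
    have hQv : (Qmat σ S *ᵥ y0) q
        = ∑ i, ∑ b, ((∑ c, S (σ q.1) (σ 0) q.2 c * S (σ i) (σ 0) b c) / n) * y0 (i, b) := by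
      rw [show (Qmat σ S *ᵥ y0) q = ∑ r : Fin n × Fin nd, Qmat σ S q r * y0 r from rfl,
        Fintype.sum_prod_type]
      rfl
    rw [hQv]
    calc (∑ a, S (σ q.1) (σ 0) q.2 a * (∑ i, ∑ b, S (σ 0) (σ i) a b * y0 (i, b))) / n
        = ∑ a, ∑ i, ∑ b, S (σ q.1) (σ 0) q.2 a * (S (σ i) (σ 0) b a * y0 (i, b)) / n := by
          rw [Finset.sum_div]
          refine Finset.sum_congr rfl fun a _ => ?_
          rw [Finset.mul_sum, Finset.sum_div]
          refine Finset.sum_congr rfl fun i _ => ?_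
          rw [Finset.mul_sum, Finset.sum_div]
          refine Finset.sum_congr rfl fun b _ => ?_
          rw [hSrev i, Matrix.transpose_apply]
      _ = ∑ i, ∑ b, ∑ a, S (σ q.1) (σ 0) q.2 a * (S (σ i) (σ 0) b a * y0 (i, b)) / n := by
          rw [Finset.sum_comm]
          exact Finset.sum_congr rfl fun i _ => Finset.sum_comm
      _ = ∑ i, ∑ b, ((∑ c, S (σ q.1) (σ 0) q.2 c * S (σ i) (σ 0) b c) / n) * y0 (i, b) := by
          refine Finset.sum_congr rfl fun i _ => Finset.sum_congr rfl fun b _ => ?_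
          rw [Finset.sum_div, Finset.sum_mul]
          exact Finset.sum_congr rfl fun c _ => by ring
  rw [hFQ, hQeqL]
  -- conclude from entrywise convergence of the heat semigroup
  rw [tendsto_pi_nhds]
  intro p
  have hent : ∀ r, Filter.Tendsto
      (fun t : ℝ => (NormedSpace.exp ((-t) • supraLap w R)) p r)
      Filter.atTop (nhds (L p r)) := by
    intro r
    exact (tendsto_pi_nhds.mp ((tendsto_pi_nhds.mp hT) p)) r
  show Filter.Tendsto
      (fun t : ℝ => ∑ r, (NormedSpace.exp ((-t) • supraLap w R)) p r * y0 r)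
      Filter.atTop (nhds (∑ r, L p r * y0 r))
  exact tendsto_finset_sum _ fun r _ => (hent r).mul_const (y0 r)
end

section
/- If G is a connected, coherent, non-bipartite matrix-weighted network, the random walk iteration y(t+1)ᵀ = y(t)ᵀ𝒫 converges to the steady state y_j*ᵀ = ȳ(0)ᵀ S_{1σ(j)} d_j/(2m), where ȳ(0)ᵀ = Σ_i y_i(0)ᵀ S_{σ(i)1} and 2m = Σ_j d_j. -/
open Matrix Kronecker Filter

variable {n nd m : ℕ}
open Finset

open Finset in
lemma path_prop {n : ℕ} {E : Fin n → Fin n → Prop} {Q : Fin n → Prop}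
    (hQ : ∀ a b, E a b → Q a → Q b) :
    ∀ (p : List (Fin n)) (i j : Fin n), IsPathFrom E i j p → Q i → Q j
  | [], i, j, h, _ => by simp [IsPathFrom] at h
  | [x], i, j, h, hi => by
    obtain ⟨-, h1, h2⟩ := h
    simp only [List.head?_cons, Option.some.injEq] at h1
    simp only [List.getLast?_singleton, Option.some.injEq] at h2
    subst h1; subst h2; exact hi
  | x :: y :: rest, i, j, h, hi => by
    obtain ⟨hc, h1, h2⟩ := h
    replace hc := List.isChain_cons_cons.mp hc
    simp only [List.head?_cons, Option.some.injEq] at h1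
    rw [List.getLast?_cons_cons] at h2
    subst h1
    exact path_prop hQ (y :: rest) y j ⟨hc.2, rfl, h2⟩ (hQ x y hc.1 hi)


-- eigen-pair lemmas for P
lemma eig_abs_le {n : ℕ} [NeZero n] (w : Fin n → Fin n → ℝ) (hw_nonneg : ∀ i j, 0 ≤ w i j)
    (hd : ∀ i, 0 < ∑ j, w i j) (μ : ℝ) (y : Fin n → ℝ) (hy : y ≠ 0)
    (heig : ∀ a, ∑ b, w a b / (∑ k, w a k) * y b = μ * y a) : |μ| ≤ 1 := by
  obtain ⟨i₀, -, hmax⟩ := Finset.exists_max_image Finset.univ (fun a => |y a|) univ_nonempty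
  have hmax' : ∀ a, |y a| ≤ |y i₀| := fun a => hmax a (mem_univ a)
  have hM : 0 < |y i₀| := by
    rcases (abs_nonneg (y i₀)).lt_or_eq with h | h
    · exact h
    · exfalso; apply hy; funext a
      have := hmax' a; rw [← h] at this
      exact abs_eq_zero.mp (le_antisymm this (abs_nonneg _))
  have key : |μ| * |y i₀| ≤ 1 * |y i₀| := by
    rw [one_mul, ← abs_mul, ← heig i₀]
    calc |∑ b, w i₀ b / (∑ k, w i₀ k) * y b|
        ≤ ∑ b, |w i₀ b / (∑ k, w i₀ k) * y b| := Finset.abs_sum_le_sum_abs _ _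
      _ ≤ ∑ b, w i₀ b / (∑ k, w i₀ k) * |y i₀| := by
          refine Finset.sum_le_sum fun b _ => ?_
          rw [abs_mul, abs_of_nonneg (div_nonneg (hw_nonneg i₀ b) (hd i₀).le)]
          exact mul_le_mul_of_nonneg_left (hmax' b)
            (div_nonneg (hw_nonneg i₀ b) (hd i₀).le)
      _ = |y i₀| := by rw [← Finset.sum_mul, ← Finset.sum_div, div_self (hd i₀).ne', one_mul]
  exact le_of_mul_le_mul_right key hM

lemma eig_one_const {n : ℕ} [NeZero n] (w : Fin n → Fin n → ℝ) (hw_nonneg : ∀ i j, 0 ≤ w i j)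
    (hd : ∀ i, 0 < ∑ j, w i j) (hconn : Connected (fun i j => w i j ≠ 0))
    (y : Fin n → ℝ)
    (heig : ∀ a, ∑ b, w a b / (∑ k, w a k) * y b = y a) : ∃ c, ∀ a, y a = c := by
  obtain ⟨i₀, -, hmax⟩ := Finset.exists_max_image Finset.univ y univ_nonempty
  have hmax' : ∀ a, y a ≤ y i₀ := fun a => hmax a (mem_univ a)
  refine ⟨y i₀, fun a => ?_⟩
  have step : ∀ a b, w a b ≠ 0 → y a = y i₀ → y b = y i₀ := by
    intro a b hab ha
    have hsum : ∑ b, w a b / (∑ k, w a k) * (y i₀ - y b) = 0 := by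
      have h1 : ∑ b, w a b / (∑ k, w a k) * y i₀ = y i₀ := by
        rw [← Finset.sum_mul, ← Finset.sum_div, div_self (hd a).ne', one_mul]
      calc ∑ b, w a b / (∑ k, w a k) * (y i₀ - y b)
          = (∑ b, w a b / (∑ k, w a k) * y i₀) - ∑ b, w a b / (∑ k, w a k) * y b := by
            rw [← Finset.sum_sub_distrib]; exact Finset.sum_congr rfl fun b _ => by ring
        _ = y i₀ - y a := by rw [h1, heig a]
        _ = 0 := by rw [ha, sub_self]
    have hterm := (Finset.sum_eq_zero_iff_of_nonneg fun b _ =>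
      mul_nonneg (div_nonneg (hw_nonneg a b) (hd a).le) (sub_nonneg.2 (hmax' b))).mp hsum
    have := hterm b (mem_univ b)
    have hpos : 0 < w a b / (∑ k, w a k) :=
      div_pos ((hw_nonneg a b).lt_of_ne (Ne.symm hab)) (hd a)
    have : y i₀ - y b = 0 := by
      rcases mul_eq_zero.mp this with h | h
      · exact absurd h hpos.ne'
      · exact h
    linarith
  obtain ⟨p, hp⟩ := hconn i₀ a
  exact path_prop (Q := fun b => y b = y i₀) (fun a b hab ha => step a b hab ha) p i₀ a hp rfl

lemma eig_neg_one_false {n : ℕ} [NeZero n] (w : Fin n → Fin n → ℝ) (hw_nonneg : ∀ i j, 0 ≤ w i j)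
    (hd : ∀ i, 0 < ∑ j, w i j) (hconn : Connected (fun i j => w i j ≠ 0))
    (hnonbip : ¬ ∃ f : Fin n → Bool, ∀ i j, w i j ≠ 0 → f i ≠ f j)
    (y : Fin n → ℝ) (hy : y ≠ 0)
    (heig : ∀ a, ∑ b, w a b / (∑ k, w a k) * y b = -1 * y a) : False := by
  obtain ⟨i₀, -, hmax⟩ := Finset.exists_max_image Finset.univ (fun a => |y a|) univ_nonempty
  have hmax' : ∀ a, |y a| ≤ |y i₀| := fun a => hmax a (mem_univ a)
  set M := |y i₀| with hMdef
  have hM : 0 < M := by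
    rcases (abs_nonneg (y i₀)).lt_or_eq with h | h
    · exact h
    · exfalso; apply hy; funext a
      show y a = 0
      have := hmax' a; rw [hMdef, ← h] at this
      exact abs_eq_zero.mp (le_antisymm this (abs_nonneg _))
  have step : ∀ a b, w a b ≠ 0 → |y a| = M → y b = -y a := by
    intro a b hab ha
    have hsum : ∑ b, w a b / (∑ k, w a k) * (M * M + y a * y b) = 0 := by
      have h1 : ∑ b, w a b / (∑ k, w a k) * (M * M) = M * M := by
        rw [← Finset.sum_mul, ← Finset.sum_div, div_self (hd a).ne', one_mul]
      have h2 : ∑ b, w a b / (∑ k, w a k) * (y a * y b)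
          = y a * ∑ b, w a b / (∑ k, w a k) * y b := by
        rw [Finset.mul_sum]; exact Finset.sum_congr rfl fun b _ => by ring
      have h3 : y a * y a = M * M := by
        have : |y a| * |y a| = M * M := by rw [ha]
        rwa [abs_mul_abs_self] at this
      calc ∑ b, w a b / (∑ k, w a k) * (M * M + y a * y b)
          = (∑ b, w a b / (∑ k, w a k) * (M * M))
            + ∑ b, w a b / (∑ k, w a k) * (y a * y b) := by
            rw [← Finset.sum_add_distrib]; exact Finset.sum_congr rfl fun b _ => by ring
        _ = M * M + y a * (-1 * y a) := by rw [h1, h2, heig a]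
        _ = 0 := by rw [← h3]; ring
    have hterm := (Finset.sum_eq_zero_iff_of_nonneg fun b _ => by
      refine mul_nonneg (div_nonneg (hw_nonneg a b) (hd a).le) ?_
      have h4 : y a * y b ≥ -(M * M) := by
        have : |y a * y b| ≤ M * M := by
          rw [abs_mul, ha]
          exact mul_le_mul_of_nonneg_left (hmax' b) hM.le
        linarith [neg_abs_le (y a * y b)]
      linarith).mp hsum
    have h5 := hterm b (mem_univ b)
    have hpos : 0 < w a b / (∑ k, w a k) :=
      div_pos ((hw_nonneg a b).lt_of_ne (Ne.symm hab)) (hd a)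
    have h6 : M * M + y a * y b = 0 := by
      rcases mul_eq_zero.mp h5 with h | h
      · exact absurd h hpos.ne'
      · exact h
    have hya : y a ≠ 0 := by
      intro h0; rw [h0] at ha; simp at ha; exact hM.ne' (by rw [← ha])
    have : y a * y b = y a * (-y a) := by
      have h3 : y a * y a = M * M := by
        have : |y a| * |y a| = M * M := by rw [ha]
        rwa [abs_mul_abs_self] at this
      nlinarith
    exact mul_left_cancel₀ hya this
  have hall : ∀ a, |y a| = M := by
    intro a
    obtain ⟨p, hp⟩ := hconn i₀ a
    refine path_prop (Q := fun b => |y b| = M) ?_ p i₀ a hp rfl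
    intro a b hab ha
    rw [step a b hab ha, abs_neg, ha]
  apply hnonbip
  refine ⟨fun a => decide (0 < y a), fun a b hab => ?_⟩
  have hya : y a ≠ 0 := by
    intro h0
    have := hall a
    rw [h0, abs_zero] at this
    exact hM.ne' this.symm
  have hb := step a b hab (hall a)
  rcases hya.lt_or_gt with h | h
  · simp [h.not_gt, hb, neg_pos.2 h, h]
  · simp [h, hb, h.not_gt, neg_lt_zero.2 h]

theorem scalar_P_tendsto {n : ℕ} [NeZero n] (w : Fin n → Fin n → ℝ)
    (hw_symm : ∀ i j, w i j = w j i) (hw_nonneg : ∀ i j, 0 ≤ w i j)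
    (hd : ∀ i, 0 < ∑ j, w i j)
    (hconn : Connected (fun i j => w i j ≠ 0))
    (hnonbip : ¬ ∃ f : Fin n → Bool, ∀ i j, w i j ≠ 0 → f i ≠ f j)
    (i j : Fin n) :
    Filter.Tendsto (fun t : ℕ => ((Matrix.of fun a b => w a b / ∑ k, w a k) ^ t) i j)
      Filter.atTop (nhds ((∑ k, w j k) / ∑ a, ∑ k, w a k)) := by
  set d : Fin n → ℝ := fun a => ∑ k, w a k with hd_def
  set sd : Fin n → ℝ := fun a => Real.sqrt (d a) with hsd_def
  have hsd_pos : ∀ a, 0 < sd a := fun a => Real.sqrt_pos.2 (hd a)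
  have hsd_sq : ∀ a, sd a * sd a = d a := fun a => Real.mul_self_sqrt (hd a).le
  set N : Matrix (Fin n) (Fin n) ℝ := Matrix.of (fun a b => w a b / (sd a * sd b)) with hN_def
  set P : Matrix (Fin n) (Fin n) ℝ := Matrix.of (fun a b => w a b / d a) with hP_def
  have hNh : N.IsHermitian := by
    refine Matrix.ext fun a b => ?_
    simp only [hN_def, Matrix.conjTranspose_apply, Matrix.of_apply, star_trivial]
    rw [hw_symm b a, mul_comm]
  -- P^t in terms of N^t
  have hPN : ∀ (t : ℕ) (a b : Fin n), (P ^ t) a b = sd b / sd a * (N ^ t) a b := by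
    intro t
    induction t with
    | zero =>
      intro a b
      by_cases h : a = b
      · subst h; simp [Matrix.one_apply_eq, div_self (hsd_pos a).ne']
      · simp [Matrix.one_apply_ne h]
    | succ t ih =>
      intro a b
      rw [pow_succ, pow_succ, Matrix.mul_apply, Matrix.mul_apply, Finset.mul_sum]
      refine Finset.sum_congr rfl fun k _ => ?_
      rw [ih a k]
      show sd k / sd a * (N ^ t) a k * (w k b / d k)
          = sd b / sd a * ((N ^ t) a k * (w k b / (sd k * sd b)))
      rw [← hsd_sq k]
      field_simp [(hsd_pos a).ne', (hsd_pos k).ne', (hsd_pos b).ne']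
  set U : Matrix (Fin n) (Fin n) ℝ := (hNh.eigenvectorUnitary : Matrix (Fin n) (Fin n) ℝ) with hU_def
  set ev : Fin n → ℝ := hNh.eigenvalues with hev_def
  have hspec : N = U * Matrix.diagonal ev * star U := by
    simpa using hNh.spectral_theorem
  have hUU : star U * U = 1 := Matrix.UnitaryGroup.star_mul_self _
  have hUU' : U * star U = 1 := hNh.eigenvectorUnitary.2.2
  have hNpow : ∀ t : ℕ, N ^ t = U * Matrix.diagonal (fun k => ev k ^ t) * star U := by
    intro t
    induction t with
    | zero =>
      rw [pow_zero, show (fun k => (ev k ^ 0 : ℝ)) = fun _ => 1 from funext fun k => pow_zero _,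
        Matrix.diagonal_one, mul_one, hUU']
    | succ t ih =>
      rw [pow_succ, ih, hspec]
      simp only [Matrix.mul_assoc]
      rw [← Matrix.mul_assoc (star U) U, hUU, one_mul,
        ← Matrix.mul_assoc (Matrix.diagonal fun k => ev k ^ t),
        Matrix.diagonal_mul_diagonal]
      rw [show (fun k => ev k ^ t * ev k) = fun k => ev k ^ (t + 1) from
        funext fun k => (pow_succ _ _).symm]
  have hNU : N * U = U * Matrix.diagonal ev := by
    rw [hspec, Matrix.mul_assoc (U * Matrix.diagonal ev) (star U) U, hUU, mul_one]
  have hcol : ∀ k a, ∑ b, N a b * U b k = ev k * U a k := by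
    intro k a
    have h1 := congrFun (congrFun hNU a) k
    rw [Matrix.mul_apply, Matrix.mul_diagonal] at h1
    rw [h1, mul_comm]
  have horth : ∀ k, ∑ b, U b k * U b k = 1 := by
    intro k
    have h1 := congrFun (congrFun hUU k) k
    rw [Matrix.mul_apply] at h1
    simp only [Matrix.star_apply, star_trivial, Matrix.one_apply_eq] at h1
    exact h1
  -- eigenvector → P-eigenvector transfer
  have htransfer : ∀ (μ : ℝ) (x : Fin n → ℝ), (∀ a, ∑ b, N a b * x b = μ * x a) →
      ∀ a, ∑ b, w a b / d a * ((fun c => x c / sd c) b) = μ * ((fun c => x c / sd c) a) := by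
    intro μ x hx a
    have h1 : ∑ b, w a b / d a * (x b / sd b) = (∑ b, N a b * x b) / sd a := by
      rw [Finset.sum_div]
      refine Finset.sum_congr rfl fun b _ => ?_
      show w a b / d a * (x b / sd b) = w a b / (sd a * sd b) * x b / sd a
      rw [← hsd_sq a]
      field_simp
    simp only []
    rw [h1, hx a, mul_div_assoc]
  have hevclass : ∀ k, ev k = 1 ∨ |ev k| < 1 := by
    intro k
    set x : Fin n → ℝ := fun a => U a k with hx
    have hxnz : x ≠ 0 := by
      intro h0
      have h1 := horth k
      rw [show (fun b => U b k * U b k) = fun b => x b * x b from rfl] at h1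
      simp only [h0, Pi.zero_apply, mul_zero, Finset.sum_const_zero] at h1
      exact zero_ne_one h1
    set y : Fin n → ℝ := fun a => x a / sd a with hy
    have hynz : y ≠ 0 := by
      intro h0
      apply hxnz
      funext a
      have h1 := congrFun h0 a
      simp only [hy, Pi.zero_apply] at h1
      exact (div_eq_zero_iff.mp h1).resolve_right (hsd_pos a).ne'
    have heigy := htransfer (ev k) x (hcol k)
    have habs := eig_abs_le w hw_nonneg hd (ev k) y hynz heigy
    by_cases h1 : ev k = 1
    · exact Or.inl h1
    refine Or.inr ?_
    rcases lt_or_eq_of_le habs with h | h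
    · exact h
    exfalso
    rcases (abs_eq (by norm_num : (0:ℝ) ≤ 1)).mp h with h2 | h2
    · exact h1 h2
    · exact eig_neg_one_false w hw_nonneg hd hconn hnonbip y hynz
        (fun a => by rw [heigy a, h2])
  have heigsp : ∀ x : Fin n → ℝ, (∀ a, ∑ b, N a b * x b = x a) →
      ∃ c, ∀ a, x a = c * sd a := by
    intro x hx
    have heigy := htransfer 1 x (fun a => by rw [hx a, one_mul])
    simp only [one_mul] at heigy
    obtain ⟨c, hc⟩ := eig_one_const w hw_nonneg hd hconn _ heigy
    refine ⟨c, fun a => ?_⟩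
    have := hc a
    rw [← this]
    rw [div_mul_cancel₀ _ (hsd_pos a).ne']
  set g : Fin n → ℝ := fun k => if ev k = 1 then 1 else 0 with hg
  set L : Matrix (Fin n) (Fin n) ℝ := U * Matrix.diagonal g * star U with hL
  have hLentry : ∀ a b, L a b = ∑ k, U a k * g k * U b k := by
    intro a b
    rw [hL, Matrix.mul_apply]
    refine Finset.sum_congr rfl fun k _ => ?_
    rw [Matrix.mul_diagonal, Matrix.star_apply, star_trivial]
  have hNt_entry : ∀ (t : ℕ) (a b : Fin n),
      (N ^ t) a b = ∑ k, U a k * ev k ^ t * U b k := by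
    intro t a b
    rw [hNpow t, Matrix.mul_apply]
    refine Finset.sum_congr rfl fun k _ => ?_
    rw [Matrix.mul_diagonal, Matrix.star_apply, star_trivial]
  have htendN : ∀ a b, Filter.Tendsto (fun t : ℕ => (N ^ t) a b) atTop (nhds (L a b)) := by
    intro a b
    rw [hLentry]
    refine Filter.Tendsto.congr (fun t => (hNt_entry t a b).symm) ?_
    refine tendsto_finset_sum _ fun k _ => ?_
    rcases hevclass k with h | h
    · have : ∀ t : ℕ, U a k * ev k ^ t * U b k = U a k * g k * U b k := by
        intro t; simp [hg, h]
      simp only [this]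
      exact tendsto_const_nhds
    · have h1 : ev k ≠ 1 := fun he => by rw [he] at h; norm_num at h
      have h2 := tendsto_pow_atTop_nhds_zero_of_abs_lt_one h
      have h3 : Filter.Tendsto (fun t : ℕ => U a k * ev k ^ t * U b k) atTop
          (nhds (U a k * 0 * U b k)) := (h2.const_mul _).mul_const _
      have h4 : U a k * 0 * U b k = U a k * g k * U b k := by rw [hg]; simp [h1]
      rwa [h4] at h3
  have hNL : N * L = L := by
    rw [hL, hspec]
    simp only [Matrix.mul_assoc]
    rw [← Matrix.mul_assoc (star U) U, hUU, one_mul,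
      ← Matrix.mul_assoc (Matrix.diagonal ev), Matrix.diagonal_mul_diagonal]
    rw [show (fun k => ev k * g k) = g from funext fun k => by
      by_cases h : ev k = 1 <;> simp [hg, h]]
  have hLcol : ∀ b, ∃ c, ∀ a, L a b = c * sd a := by
    intro b
    refine heigsp (fun a => L a b) fun a => ?_
    have h1 := congrFun (congrFun hNL a) b
    rw [Matrix.mul_apply] at h1
    exact h1
  choose c hc using hLcol
  have hLsymm : ∀ a b, L a b = L b a := by
    intro a b
    rw [hLentry, hLentry]
    exact Finset.sum_congr rfl fun k _ => by ring
  set a₀ : Fin n := 0 with ha₀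
  set α : ℝ := c a₀ / sd a₀ with hα_def
  have hcb : ∀ b, c b = α * sd b := by
    intro b
    have h1 : c b * sd a₀ = c a₀ * sd b := by
      rw [← hc b a₀, hLsymm a₀ b, hc a₀ b]
    rw [hα_def, div_mul_eq_mul_div, eq_div_iff (hsd_pos a₀).ne']
    exact h1
  have hLab : ∀ a b, L a b = α * sd a * sd b := fun a b => by
    rw [hc b a, hcb b]; ring
  have hNv : ∀ a, ∑ b, N a b * sd b = sd a := by
    intro a
    have h1 : ∑ b, N a b * sd b = (∑ b, w a b) / sd a := by
      rw [Finset.sum_div]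
      refine Finset.sum_congr rfl fun b _ => ?_
      show w a b / (sd a * sd b) * sd b = w a b / sd a
      rw [div_mul_eq_mul_div, mul_div_mul_right _ _ (hsd_pos b).ne']
    rw [h1, show (∑ b, w a b) = d a from rfl, ← hsd_sq a,
      mul_div_cancel_left₀ _ (hsd_pos a).ne']
  have hNtv : ∀ (t : ℕ) (a : Fin n), ∑ b, (N ^ t) a b * sd b = sd a := by
    intro t
    induction t with
    | zero => intro a; simp [Matrix.one_apply, Finset.sum_ite_eq]
    | succ t ih =>
      intro a
      rw [pow_succ']
      calc ∑ b, (N * N ^ t) a b * sd b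
          = ∑ b, (∑ k, N a k * (N ^ t) k b) * sd b := by
            refine Finset.sum_congr rfl fun b _ => ?_; rw [Matrix.mul_apply]
        _ = ∑ k, N a k * ∑ b, (N ^ t) k b * sd b := by
            simp only [Finset.sum_mul]
            rw [Finset.sum_comm]
            refine Finset.sum_congr rfl fun k _ => ?_
            rw [Finset.mul_sum]
            refine Finset.sum_congr rfl fun b _ => by ring
        _ = ∑ k, N a k * sd k := by
            refine Finset.sum_congr rfl fun k _ => by rw [ih k]
        _ = sd a := hNv a
  have hLv : ∀ a, ∑ b, L a b * sd b = sd a := by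
    intro a
    have h1 : Filter.Tendsto (fun t : ℕ => ∑ b, (N ^ t) a b * sd b) atTop
        (nhds (∑ b, L a b * sd b)) :=
      tendsto_finset_sum _ fun b _ => (htendN a b).mul_const _
    have h2 : Filter.Tendsto (fun t : ℕ => ∑ b, (N ^ t) a b * sd b) atTop
        (nhds (sd a)) := by
      simp only [hNtv]
      exact tendsto_const_nhds
    exact tendsto_nhds_unique h1 h2
  set twoM : ℝ := ∑ a, d a with htwoM
  have htwoM_pos : 0 < twoM := Finset.sum_pos (fun a _ => hd a) univ_nonempty
  have hsum_sd : ∑ b, sd b * sd b = twoM := by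
    rw [htwoM]; exact Finset.sum_congr rfl fun b _ => hsd_sq b
  have hα : α = 1 / twoM := by
    have h1 := hLv a₀
    simp only [hLab] at h1
    have h2 : ∑ x : Fin n, α * sd a₀ * sd x * sd x = α * sd a₀ * twoM := by
      rw [← hsum_sd, Finset.mul_sum]
      exact Finset.sum_congr rfl fun b _ => by ring
    have h2 : α * sd a₀ * twoM = sd a₀ := by rw [← h2]; exact h1
    have h3 : α * twoM = 1 := by
      apply mul_left_cancel₀ (hsd_pos a₀).ne'
      calc sd a₀ * (α * twoM) = α * sd a₀ * twoM := by ring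
        _ = sd a₀ := h2
        _ = sd a₀ * 1 := (mul_one _).symm
    rw [eq_div_iff htwoM_pos.ne']
    exact h3
  have h2 : sd j / sd i * L i j = d j / twoM := by
    rw [hLab, hα, ← hsd_sq j]
    field_simp [(hsd_pos i).ne', (hsd_pos j).ne', htwoM_pos.ne']
  have h1 : Filter.Tendsto (fun t : ℕ => sd j / sd i * (N ^ t) i j) atTop
      (nhds (d j / twoM)) := by
    rw [← h2]
    exact (htendN i j).const_mul _
  exact Filter.Tendsto.congr (fun t => (hPN t i j).symm) h1

lemma pathTransform_append {n nd : ℕ} (R : Fin n → Fin n → Matrix (Fin nd) (Fin nd) ℝ) :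
    ∀ (p : List (Fin n)) (b : Fin n) (q : List (Fin n)),
      p.getLast? = some b → q.head? = some b →
      pathTransform R (p ++ q.tail) = pathTransform R p * pathTransform R q
  | [], b, q, hp, hq => by simp at hp
  | [x], b, q, hp, hq => by
    match q, hq with
    | a :: l, hq =>
      simp only [List.getLast?_singleton, Option.some.injEq] at hp
      simp only [List.head?_cons, Option.some.injEq] at hq
      subst hp; subst hq
      show pathTransform R (a :: l) = pathTransform R [a] * pathTransform R (a :: l)
      rw [show pathTransform R [a] = 1 from rfl, one_mul]
  | x :: y :: rest, b, q, hp, hq => by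
    rw [List.getLast?_cons_cons] at hp
    have ih := pathTransform_append R (y :: rest) b q hp hq
    show pathTransform R (x :: y :: (rest ++ q.tail)) = _
    rw [show pathTransform R (x :: y :: (rest ++ q.tail))
        = R x y * pathTransform R (y :: (rest ++ q.tail)) from rfl,
      show pathTransform R (x :: y :: rest) = R x y * pathTransform R (y :: rest) from rfl]
    rw [show (y :: (rest ++ q.tail)) = (y :: rest) ++ q.tail from rfl, ih, mul_assoc]

lemma isPathFrom_append {n : ℕ} {E : Fin n → Fin n → Prop} {i b j : Fin n}
    {p q : List (Fin n)} (hp : IsPathFrom E i b p) (hq : IsPathFrom E b j q) :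
    IsPathFrom E i j (p ++ q.tail) := by
  obtain ⟨hc, h1, h2⟩ := hp
  obtain ⟨hc', h1', h2'⟩ := hq
  match q, hc', h1', h2' with
  | a :: l, hc', h1', h2' =>
    simp only [List.head?_cons, Option.some.injEq] at h1'
    subst h1'
    match l, hc', h2' with
    | [], _, h2' =>
      simp only [List.getLast?_singleton, Option.some.injEq] at h2'
      subst h2'
      rw [show ([a] : List (Fin n)).tail = [] from rfl, List.append_nil]
      exact ⟨hc, h1, h2⟩
    | y :: ys, hc', h2' =>
      replace hc' := List.isChain_cons_cons.mp hc'
      have hpne : p ≠ [] := by intro h0; rw [h0] at h1; simp at h1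
      rw [List.getLast?_cons_cons] at h2'
      refine ⟨?_, ?_, ?_⟩
      · show List.Chain' E (p ++ y :: ys)
        refine List.IsChain.append hc hc'.2 ?_
        intro x hx z hz
        simp only [List.head?_cons, Option.mem_def, Option.some.injEq] at hz
        subst hz
        rw [Option.mem_def, h2, Option.some.injEq] at hx
        subst hx
        exact hc'.1
      · show (p ++ y :: ys).head? = some i
        match p, h1 with
        | u :: us, h1 =>
          rw [List.cons_append, List.head?_cons]
          rw [List.head?_cons] at h1
          exact h1
      · show (p ++ y :: ys).getLast? = some j
        rw [List.getLast?_append_cons]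
        exact h2'

/-- on a connected, coherent, non-bipartite network, the random
walk iteration `y(t+1)ᵀ = y(t)ᵀ𝒫` converges to the steady state
`y_j*ᵀ = ȳ(0)ᵀ S_{1σ(j)} d_j/(2m)`, with `ȳ(0)ᵀ = Σ_i y_i(0)ᵀ S_{σ(i)1}` and
`2m = Σ_j d_j`. -/
theorem stmt14 [NeZero n] (w : Fin n → Fin n → ℝ)
    (R : Fin n → Fin n → Matrix (Fin nd) (Fin nd) ℝ)
    (σ : Fin n → Fin m) (S : Fin m → Fin m → Matrix (Fin nd) (Fin nd) ℝ)
    (hw_symm : ∀ i j, w i j = w j i) (hw_nonneg : ∀ i j, 0 ≤ w i j)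
    (hloop : ∀ i, w i i = 0)
    (hrec : ∀ i j, R i j = (R j i)ᵀ)
    (hd : ∀ i, 0 < ∑ j, w i j)
    (hcoh : Coherent (fun i j => w i j ≠ 0) R)
    (hconn : Connected (fun i j => w i j ≠ 0))
    (hnonbip : ¬ ∃ f : Fin n → Bool, ∀ i j, w i j ≠ 0 → f i ≠ f j)
    (hS : ∀ i j q, IsPathFrom (fun i j => w i j ≠ 0) i j q →
      S (σ i) (σ j) = pathTransform R q)
    (y0 : Fin n × Fin nd → ℝ) :
    Filter.Tendsto
      (fun t : ℕ => Matrix.vecMul y0 ((supraP w R) ^ t))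
      Filter.atTop
      (nhds (fun q : Fin n × Fin nd =>
        (∑ a, (∑ i, ∑ c, y0 (i, c) * S (σ i) (σ 0) c a) * S (σ 0) (σ q.1) a q.2)
          * (∑ k, w q.1 k) / (∑ j, ∑ k, w j k))) := by
  classical
  -- abbreviations
  have hS_refl : ∀ i, S (σ i) (σ i) = 1 := by
    intro i
    rw [hS i i [i] ⟨List.isChain_singleton i, rfl, rfl⟩]
    rfl
  have hedge : ∀ i j, w i j ≠ 0 → R i j = S (σ i) (σ j) := by
    intro i j hij
    rw [hS i j [i, j] ⟨List.isChain_pair.mpr hij, rfl, rfl⟩]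
    show R i j = R i j * pathTransform R [j]
    rw [show pathTransform R [j] = 1 from rfl, mul_one]
  have hS_mul : ∀ a b c, S (σ a) (σ b) * S (σ b) (σ c) = S (σ a) (σ c) := by
    intro a b c
    obtain ⟨p, hp⟩ := hconn a b
    obtain ⟨q, hq⟩ := hconn b c
    rw [hS a b p hp, hS b c q hq, ← pathTransform_append R p b q hp.2.2 hq.2.1,
      ← hS a c _ (isPathFrom_append hp hq)]
  set P : Matrix (Fin n) (Fin n) ℝ := Matrix.of (fun a b => w a b / ∑ k, w a k) with hPdef
  have hPt : ∀ (t : ℕ) (p q : Fin n × Fin nd),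
      ((supraP w R) ^ t) p q = (P ^ t) p.1 q.1 * S (σ p.1) (σ q.1) p.2 q.2 := by
    intro t
    induction t with
    | zero =>
      rintro ⟨p1, p2⟩ ⟨q1, q2⟩
      rw [pow_zero, pow_zero]
      by_cases h1 : p1 = q1
      · subst h1
        show (1 : Matrix (Fin n × Fin nd) (Fin n × Fin nd) ℝ) (p1, p2) (p1, q2)
            = (1 : Matrix (Fin n) (Fin n) ℝ) p1 p1 * S (σ p1) (σ p1) p2 q2
        rw [Matrix.one_apply_eq, one_mul, hS_refl]
        by_cases h2 : p2 = q2
        · subst h2; rw [Matrix.one_apply_eq, Matrix.one_apply_eq]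
        · rw [Matrix.one_apply_ne (by simp [h2] :
            ((p1, p2) : Fin n × Fin nd) ≠ (p1, q2)), Matrix.one_apply_ne h2]
      · show (1 : Matrix (Fin n × Fin nd) (Fin n × Fin nd) ℝ) (p1, p2) (q1, q2)
            = (1 : Matrix (Fin n) (Fin n) ℝ) p1 q1 * S (σ p1) (σ q1) p2 q2
        rw [Matrix.one_apply_ne (by simp [h1] :
            ((p1, p2) : Fin n × Fin nd) ≠ (q1, q2)), Matrix.one_apply_ne h1, zero_mul]
    | succ t ih =>
      intro p q
      rw [pow_succ, pow_succ, Matrix.mul_apply, Matrix.mul_apply, Fintype.sum_prod_type,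
        Finset.sum_mul]
      refine Finset.sum_congr rfl fun k _ => ?_
      by_cases hk : w k q.1 = 0
      · have hz : ∀ c, (supraP w R) (k, c) q = 0 := by
          intro c
          show w k q.1 * R k q.1 c q.2 / (∑ k', w k k') = 0
          rw [hk, zero_mul, zero_div]
        have hz2 : P k q.1 = 0 := by
          show w k q.1 / (∑ k', w k k') = 0
          rw [hk, zero_div]
        simp [hz, hz2]
      · have hr := hedge k q.1 hk
        have hmul := hS_mul p.1 k q.1
        calc ∑ c, ((supraP w R) ^ t) p (k, c) * (supraP w R) (k, c) q
            = ∑ c, (P ^ t) p.1 k * (w k q.1 / ∑ k', w k k')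
                * (S (σ p.1) (σ k) p.2 c * S (σ k) (σ q.1) c q.2) := by
              refine Finset.sum_congr rfl fun c _ => ?_
              rw [ih p (k, c)]
              show (P ^ t) p.1 k * S (σ p.1) (σ k) p.2 c
                  * (w k q.1 * R k q.1 c q.2 / (∑ k', w k k')) = _
              rw [hr]
              ring
          _ = (P ^ t) p.1 k * (w k q.1 / ∑ k', w k k')
                * ∑ c, S (σ p.1) (σ k) p.2 c * S (σ k) (σ q.1) c q.2 := by
              rw [Finset.mul_sum]
          _ = (P ^ t) p.1 k * P k q.1 * S (σ p.1) (σ q.1) p.2 q.2 := by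
              rw [show (∑ c, S (σ p.1) (σ k) p.2 c * S (σ k) (σ q.1) c q.2)
                  = (S (σ p.1) (σ k) * S (σ k) (σ q.1)) p.2 q.2 from
                  (Matrix.mul_apply).symm, hmul]
              show _ = (P ^ t) p.1 k * (w k q.1 / ∑ k', w k k') * S (σ p.1) (σ q.1) p.2 q.2
              ring
  rw [tendsto_pi_nhds]
  intro q
  have hvec : ∀ t : ℕ, Matrix.vecMul y0 ((supraP w R) ^ t) q
      = ∑ i, ∑ c, y0 (i, c) * ((P ^ t) i q.1 * S (σ i) (σ q.1) c q.2) := by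
    intro t
    show ∑ p : Fin n × Fin nd, y0 p * ((supraP w R) ^ t) p q = _
    rw [Fintype.sum_prod_type]
    exact Finset.sum_congr rfl fun i _ => Finset.sum_congr rfl fun c _ => by
      rw [hPt t (i, c) q]
  have hlim : ∀ i : Fin n, Filter.Tendsto (fun t : ℕ => (P ^ t) i q.1) Filter.atTop
      (nhds ((∑ k, w q.1 k) / ∑ a, ∑ k, w a k)) := fun i =>
    scalar_P_tendsto w hw_symm hw_nonneg hd hconn hnonbip i q.1
  have H : Filter.Tendsto
      (fun t : ℕ => ∑ i, ∑ c, y0 (i, c) * ((P ^ t) i q.1 * S (σ i) (σ q.1) c q.2))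
      Filter.atTop
      (nhds (∑ i, ∑ c, y0 (i, c)
        * ((∑ k, w q.1 k) / (∑ a, ∑ k, w a k) * S (σ i) (σ q.1) c q.2))) := by
    refine tendsto_finset_sum _ fun i _ => tendsto_finset_sum _ fun c _ => ?_
    exact (((hlim i).mul_const _).const_mul _)
  have Heq : (∑ i, ∑ c, y0 (i, c)
        * ((∑ k, w q.1 k) / (∑ a, ∑ k, w a k) * S (σ i) (σ q.1) c q.2))
      = (∑ a, (∑ i, ∑ c, y0 (i, c) * S (σ i) (σ 0) c a) * S (σ 0) (σ q.1) a q.2)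
        * (∑ k, w q.1 k) / (∑ j, ∑ k, w j k) := by
    have expand : ∀ (i : Fin n) (c : Fin nd), S (σ i) (σ q.1) c q.2
        = ∑ a, S (σ i) (σ 0) c a * S (σ 0) (σ q.1) a q.2 := by
      intro i c
      rw [← hS_mul i 0 q.1, Matrix.mul_apply]
    calc ∑ i, ∑ c, y0 (i, c)
          * ((∑ k, w q.1 k) / (∑ a, ∑ k, w a k) * S (σ i) (σ q.1) c q.2)
        = ∑ i, ∑ c, ∑ a, y0 (i, c) * S (σ i) (σ 0) c a * S (σ 0) (σ q.1) a q.2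
            * ((∑ k, w q.1 k) / (∑ j, ∑ k, w j k)) := by
          refine Finset.sum_congr rfl fun i _ => Finset.sum_congr rfl fun c _ => ?_
          rw [expand i c, Finset.mul_sum, Finset.mul_sum]
          exact Finset.sum_congr rfl fun a _ => by ring
      _ = ∑ a, ∑ i, ∑ c, y0 (i, c) * S (σ i) (σ 0) c a * S (σ 0) (σ q.1) a q.2
            * ((∑ k, w q.1 k) / (∑ j, ∑ k, w j k)) := by
          rw [show (∑ i, ∑ c, ∑ a, y0 (i, c) * S (σ i) (σ 0) c a * S (σ 0) (σ q.1) a q.2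
              * ((∑ k, w q.1 k) / (∑ j, ∑ k, w j k)))
              = ∑ i, ∑ a, ∑ c, y0 (i, c) * S (σ i) (σ 0) c a * S (σ 0) (σ q.1) a q.2
              * ((∑ k, w q.1 k) / (∑ j, ∑ k, w j k)) from
            Finset.sum_congr rfl fun i _ => Finset.sum_comm]
          exact Finset.sum_comm
      _ = (∑ a, (∑ i, ∑ c, y0 (i, c) * S (σ i) (σ 0) c a) * S (σ 0) (σ q.1) a q.2)
            * (∑ k, w q.1 k) / (∑ j, ∑ k, w j k) := by
          conv_rhs => rw [Finset.sum_mul, Finset.sum_div]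
          refine Finset.sum_congr rfl fun a _ => ?_
          conv_rhs => rw [Finset.sum_mul, Finset.sum_mul, Finset.sum_div]
          refine Finset.sum_congr rfl fun i _ => ?_
          conv_rhs => rw [Finset.sum_mul, Finset.sum_mul, Finset.sum_div]
          exact Finset.sum_congr rfl fun c _ => by ring
  exact Filter.Tendsto.congr (fun t => (hvec t).symm) (Heq ▸ H)
end

section
/- For a connected matrix-weighted network whose negation (replacing each W_{ij} by −W_{ij}) is coherent while the network itself is coherent as well, the underlying graph is bipartite. Equivalently: if both 1 and −1 are eigenvalues of the supra-transition matrix 𝒫 of a connected matrix-weighted network, then the underlying magnitude graph is bipartite. -/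
open Matrix Kronecker Filter

variable {n nd m : ℕ}

lemma pathTransform_neg (R : Fin n → Fin n → Matrix (Fin nd) (Fin nd) ℝ) :
    ∀ p : List (Fin n),
      pathTransform (fun i j => -(R i j)) p = (-1 : ℝ) ^ (p.length - 1) • pathTransform R p
  | [] => by simp [pathTransform]
  | [_] => by simp [pathTransform]
  | i :: j :: rest => by
      have ih := pathTransform_neg R (j :: rest)
      simp only [pathTransform, ih, List.length_cons]
      rw [Matrix.mul_smul, neg_mul, smul_neg, ← neg_smul]
      congr 1
      simp [pow_succ]

lemma cycle_length_odd [NeZero nd] {E : Fin n → Fin n → Prop}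
    {R : Fin n → Fin n → Matrix (Fin nd) (Fin nd) ℝ}
    (hcoh : Coherent E R) (hcohneg : Coherent E (fun i j => -(R i j)))
    {i : Fin n} {p : List (Fin n)} (hp : IsPathFrom E i i p) : p.length % 2 = 1 := by
  have h1 := hcoh i p hp
  have h2 := hcohneg i p hp
  rw [pathTransform_neg, h1] at h2
  have hz : (0 : Fin nd) = 0 := rfl
  have h3 : ((-1 : ℝ) ^ (p.length - 1) • (1 : Matrix (Fin nd) (Fin nd) ℝ)) 0 0
      = (1 : Matrix (Fin nd) (Fin nd) ℝ) 0 0 := by rw [h2]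
  simp [Matrix.smul_apply, Matrix.one_apply] at h3
  have heven : Even (p.length - 1) :=
    (neg_one_pow_eq_one_iff_even (by norm_num : (-1:ℝ) ≠ 1)).1 h3
  have hne : p ≠ [] := by
    intro h; rw [h] at hp; simp [IsPathFrom] at hp
  have hlen : 1 ≤ p.length := List.length_pos_iff.2 hne
  obtain ⟨k, hk⟩ := heven
  omega

/-- if a connected matrix-weighted network is coherent and its
negation (every `W_{ij}` replaced by `−W_{ij}`) is also coherent, then the
underlying magnitude graph is bipartite. -/
theorem stmt19 [NeZero nd] (w : Fin n → Fin n → ℝ)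
    (R : Fin n → Fin n → Matrix (Fin nd) (Fin nd) ℝ)
    (hw_symm : ∀ i j, w i j = w j i)
    (hrec : ∀ i j, R i j = (R j i)ᵀ)
    (hconn : Connected (fun i j => w i j ≠ 0))
    (hcoh : Coherent (fun i j => w i j ≠ 0) R)
    (hcohneg : Coherent (fun i j => w i j ≠ 0) (fun i j => -(R i j))) :
    ∃ f : Fin n → Bool, ∀ i j, w i j ≠ 0 → f i ≠ f j := by
  set E : Fin n → Fin n → Prop := fun i j => w i j ≠ 0 with hE
  rcases isEmpty_or_nonempty (Fin n) with he | hne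
  · exact ⟨fun _ => true, fun i => isEmptyElim i⟩
  obtain ⟨v0⟩ := hne
  set L : Fin n → ℕ := fun i => (hconn v0 i).choose.length with hL
  refine ⟨fun i => decide (L i % 2 = 0), ?_⟩
  intro i j hij
  have hEsymm : ∀ a b, E a b → E b a := by
    intro a b h; simpa [hE, hw_symm a b] using h
  obtain hp := (hconn v0 i).choose_spec
  obtain hq := (hconn v0 j).choose_spec
  set p := (hconn v0 i).choose with hpdef
  set q := (hconn v0 j).choose with hqdef
  obtain ⟨hpc, hph, hpl⟩ := hp
  obtain ⟨hqc, hqh, hql⟩ := hq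
  have hpne : p ≠ [] := by intro h; rw [h] at hph; simp at hph
  have hqne : q ≠ [] := by intro h; rw [h] at hqh; simp at hqh
  -- p' = p ++ [j] is a path from v0 to j
  have hp'c : List.Chain' E (p ++ [j]) := by
    refine hpc.append (List.isChain_singleton j) ?_
    intro x hx y hy
    simp at hy
    rw [hpl] at hx; simp at hx
    rw [← hx, ← hy]; exact hij
  have hp'h : (p ++ [j]).head? = some v0 := by
    rw [List.head?_append, hph]; rfl
  have hp'l : (p ++ [j]).getLast? = some j := List.getLast?_concat
  -- reverse of q is a path from j to v0
  have hqrc : List.Chain' E q.reverse := by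
    show List.IsChain E q.reverse; rw [List.isChain_reverse]
    exact hqc.imp (fun a b h => hEsymm a b h)
  have hqrh : q.reverse.head? = some j := by rw [List.head?_reverse, hql]
  have hqrl : q.reverse.getLast? = some v0 := by
    rw [List.getLast?_reverse, hqh]
  obtain ⟨t, ht⟩ : ∃ t, q.reverse = j :: t := by
    cases hq : q.reverse with
    | nil => rw [hq] at hqrh; simp at hqrh
    | cons a t => rw [hq] at hqrh; simp at hqrh; exact ⟨t, by rw [hqrh]⟩
  -- the cycle c = (p ++ [j]) ++ t
  set c : List (Fin n) := (p ++ [j]) ++ t with hc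
  have hcc : List.Chain' E c := by
    refine hp'c.append ?_ ?_
    · have := hqrc; rw [ht] at this; exact this.tail
    · intro x hx y hy
      rw [hp'l] at hx; simp at hx
      have := hqrc; rw [ht] at this
      cases t with
      | nil => simp at hy
      | cons b t' =>
        simp at hy
        change List.IsChain E (j :: b :: t') at this; rw [List.isChain_cons_cons] at this
        rw [← hx, ← hy]; exact this.1
  have hch : c.head? = some v0 := by
    rw [hc, List.head?_append, hp'h]; rfl
  have hcl : c.getLast? = some v0 := by
    cases ht' : t with
    | nil =>
      -- then q.reverse = [j], so v0 = j
      rw [ht'] at ht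
      rw [ht] at hqrl; simp at hqrl
      rw [hc, ht']
      simp only [List.append_nil]
      rw [hp'l, hqrl]
    | cons b t' =>
      rw [hc, List.getLast?_append]
      have h1 : t.getLast? = (j :: t).getLast? := by
        rw [ht']; simp [List.getLast?_cons_cons]
      rw [← ht] at h1
      have : t.getLast? = some v0 := by rw [h1, hqrl]
      rw [this]; rfl
  have hcyc : c.length % 2 = 1 :=
    cycle_length_odd hcoh hcohneg ⟨hcc, hch, hcl⟩
  have hqlen : q.length = t.length + 1 := by
    have := congrArg List.length ht; simpa using this
  have hclen : c.length = p.length + 1 + t.length := by simp [hc]; omega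
  have hparity : p.length % 2 ≠ q.length % 2 := by omega
  show decide (p.length % 2 = 0) ≠ decide (q.length % 2 = 0)
  intro h
  have h0 : p.length % 2 = 0 ↔ q.length % 2 = 0 := decide_eq_decide.mp h
  rcases Nat.mod_two_eq_zero_or_one p.length with h1 | h1 <;>
    rcases Nat.mod_two_eq_zero_or_one q.length with h2 | h2
  · exact hparity (by omega)
  · exact absurd (h0.mp h1) (by omega)
  · exact absurd (h0.mpr h2) (by omega)
  · exact hparity (by omega)
end
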